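/- arXiv:2301.10873 — 4 statements merged into one kernel-verified Lean document; each statement's English description precedes it below -/
import Mathlib

section
/- Suppose the data (x,u) satisfy the standing data assumptions and let λ ≥ 1 be such that A·A^T + B·B^T < (λ−1)·I_n (strict Loewner inequality) for every (A,B) ∈ Σ(Q). If the stacked signal ξ(t) := (ẋ(t); −x(t); −u(t)) ∈ ℝ^{2n+m} satisfies V_0^T(ξ) ≤ (1/2)LT for some L ≥ 0, then for every (A,B) ∈ Σ(Q) one has V_0^T(ẋ − Ax − Bu) ≤ (1/2)λLT; that is, Σ(Q) ⊆ N^{λL}_{x,u}. -/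
open MeasureTheory Matrix

noncomputable def opNorm {ι κ : Type} [Fintype ι] [Fintype κ] [DecidableEq κ]
    (M : Matrix ι κ ℝ) : ℝ :=
  ‖LinearMap.toContinuousLinearMap (Matrix.toEuclideanLin M)‖

noncomputable def euclNorm {ι : Type} [Fintype ι] (v : ι → ℝ) : ℝ :=
  Real.sqrt (∑ i, v i ^ 2)

/-- `v` is `L`-square Lipschitz on `[0,T]`. -/
def SqLipschitz {ι : Type} [Fintype ι] [DecidableEq ι] (T L : ℝ) (v : ℝ → ι → ℝ) : Prop :=
  ∀ t₁ ∈ Set.Icc (0:ℝ) T, ∀ t₂ ∈ Set.Icc (0:ℝ) T,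
    opNorm (Matrix.vecMulVec (v t₁) (v t₁) - Matrix.vecMulVec (v t₂) (v t₂)) ≤ L * |t₁ - t₂|

/-- The set of all partition sums appearing in the definition of total square variation. -/
def partitionSums {ι : Type} [Fintype ι] [DecidableEq ι] (T : ℝ) (v : ℝ → ι → ℝ) : Set ℝ :=
  { s | ∃ (N : ℕ) (t : Fin (N + 1) → ℝ), Monotone t ∧ t 0 = 0 ∧ t (Fin.last N) = T ∧
      s = ∑ i : Fin N, opNorm (Matrix.vecMulVec (v (t i.succ)) (v (t i.succ)) -
            Matrix.vecMulVec (v (t i.castSucc)) (v (t i.castSucc))) }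

/-- Total square variation `V_0^T(v)`. -/
noncomputable def totalSqVar {ι : Type} [Fintype ι] [DecidableEq ι] (T : ℝ) (v : ℝ → ι → ℝ) : ℝ :=
  sSup (partitionSums T v)

/-- `V_0^T(v) ≤ c`, phrased via all partition sums. -/
def TotalSqVarLE {ι : Type} [Fintype ι] [DecidableEq ι] (T : ℝ) (v : ℝ → ι → ℝ) (c : ℝ) : Prop :=
  ∀ s ∈ partitionSums T v, s ≤ c

/-- Loewner order `M ≤ N`. -/
def loewnerLE {ι : Type} [Fintype ι] (M N : Matrix ι ι ℝ) : Prop := (N - M).PosSemidef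

/-- Strict Loewner order `M < N`. -/
def loewnerLT {ι : Type} [Fintype ι] (M N : Matrix ι ι ℝ) : Prop := (N - M).PosDef

/-- `M` is negative definite. -/
def negDefQ {ι : Type} [Fintype ι] (M : Matrix ι ι ℝ) : Prop := (-M).PosDef

/-- Entrywise Lebesgue integral of a matrix-valued function on `[0,T]`. -/
noncomputable def matIntegral {ι κ : Type} (T : ℝ) (f : ℝ → Matrix ι κ ℝ) : Matrix ι κ ℝ :=
  Matrix.of fun i j => ∫ t in Set.Ioc (0:ℝ) T, f t i j

/-- `δ • Σ_{k<N} v(kδ) v(kδ)ᵀ`. -/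
noncomputable def sampledGram {ι : Type} [Fintype ι] (δ : ℝ) (N : ℕ) (v : ℝ → ι → ℝ) :
    Matrix ι ι ℝ :=
  δ • ∑ k ∈ Finset.range N, Matrix.vecMulVec (v (k * δ)) (v (k * δ))

/-- The noise signal `ẋ − Ax − Bu` associated with a candidate system `(A,B)`. -/
def noiseSig {n m : ℕ} (xdot x : ℝ → Fin n → ℝ) (u : ℝ → Fin m → ℝ)
    (A : Matrix (Fin n) (Fin n) ℝ) (B : Matrix (Fin n) (Fin m) ℝ) : ℝ → Fin n → ℝ :=
  fun t => xdot t - A.mulVec (x t) - B.mulVec (u t)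

/-- `Σ(Q')`: systems consistent with the continuous-time data. -/
def SigmaCont {n m : ℕ} (T : ℝ) (xdot x : ℝ → Fin n → ℝ) (u : ℝ → Fin m → ℝ)
    (Q' : Matrix (Fin n) (Fin n) ℝ) :
    Set (Matrix (Fin n) (Fin n) ℝ × Matrix (Fin n) (Fin m) ℝ) :=
  { AB | loewnerLE (matIntegral T fun t =>
      Matrix.vecMulVec (noiseSig xdot x u AB.1 AB.2 t) (noiseSig xdot x u AB.1 AB.2 t)) Q' }

/-- `Σ^δ(Q')`: systems consistent with the data sampled at stepsize `δ` (with `N = T/δ` samples). -/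
def SigmaDisc {n m : ℕ} (δ : ℝ) (N : ℕ) (xdot x : ℝ → Fin n → ℝ) (u : ℝ → Fin m → ℝ)
    (Q' : Matrix (Fin n) (Fin n) ℝ) :
    Set (Matrix (Fin n) (Fin n) ℝ × Matrix (Fin n) (Fin m) ℝ) :=
  { AB | loewnerLE (sampledGram δ N (noiseSig xdot x u AB.1 AB.2)) Q' }

/-- `M^L_{x,u}`: systems whose associated noise is `L`-square Lipschitz. -/
def Mset {n m : ℕ} (T L : ℝ) (xdot x : ℝ → Fin n → ℝ) (u : ℝ → Fin m → ℝ) :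
    Set (Matrix (Fin n) (Fin n) ℝ × Matrix (Fin n) (Fin m) ℝ) :=
  { AB | SqLipschitz T L (noiseSig xdot x u AB.1 AB.2) }

/-- `N^L_{x,u}`: systems whose associated noise has total square variation at most `LT/2`. -/
def Nset {n m : ℕ} (T L : ℝ) (xdot x : ℝ → Fin n → ℝ) (u : ℝ → Fin m → ℝ) :
    Set (Matrix (Fin n) (Fin n) ℝ × Matrix (Fin n) (Fin m) ℝ) :=
  { AB | TotalSqVarLE T (noiseSig xdot x u AB.1 AB.2) (L * T / 2) }

/-- The stacked signal `ξ(t) = (ẋ(t); −x(t); −u(t))`. -/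
def xiSig {n m : ℕ} (xdot x : ℝ → Fin n → ℝ) (u : ℝ → Fin m → ℝ) (t : ℝ) :
    (Fin n ⊕ (Fin n ⊕ Fin m)) → ℝ :=
  Sum.elim (xdot t) (Sum.elim (fun i => -(x t i)) (fun j => -(u t j)))

/-- The block matrix `[[Q + βI, P, PKᵀ], [P, 0, 0], [KP, 0, 0]]`. -/
noncomputable def lmiBlock {n m : ℕ} (Q P : Matrix (Fin n) (Fin n) ℝ)
    (K : Matrix (Fin m) (Fin n) ℝ) (β : ℝ) :
    Matrix (Fin n ⊕ (Fin n ⊕ Fin m)) (Fin n ⊕ (Fin n ⊕ Fin m)) ℝ :=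
  Matrix.fromBlocks (Q + β • (1 : Matrix (Fin n) (Fin n) ℝ))
    (Matrix.of fun i jj => Sum.elim (fun j => P i j) (fun j => (P * K.transpose) i j) jj)
    (Matrix.of fun ii j => Sum.elim (fun i => P i j) (fun k => (K * P) k j) ii)
    0

/-- The continuous-data LMI. -/
def ContLMI {n m : ℕ} (T : ℝ) (xdot x : ℝ → Fin n → ℝ) (u : ℝ → Fin m → ℝ)
    (Q P : Matrix (Fin n) (Fin n) ℝ) (K : Matrix (Fin m) (Fin n) ℝ) (β : ℝ) : Prop :=
  (matIntegral T (fun t => Matrix.vecMulVec (xiSig xdot x u t) (xiSig xdot x u t)) -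
    lmiBlock Q P K β).PosSemidef

/-- The sampled-data LMI at stepsize `δ` (with `N = T/δ` samples). -/
def SampLMI {n m : ℕ} (δ : ℝ) (N : ℕ) (xdot x : ℝ → Fin n → ℝ) (u : ℝ → Fin m → ℝ)
    (Q P : Matrix (Fin n) (Fin n) ℝ) (K : Matrix (Fin m) (Fin n) ℝ) (β : ℝ) : Prop :=
  (sampledGram δ N (xiSig xdot x u) - lmiBlock Q P K β).PosSemidef


open scoped Matrix.Norms.L2Operator

lemma opNorm_eq_l2norm {ι κ : Type} [Fintype ι] [Fintype κ] [DecidableEq κ]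
    (M : Matrix ι κ ℝ) : opNorm M = ‖M‖ := rfl

lemma psd_smul' {ι : Type} [Fintype ι] {S : Matrix ι ι ℝ} (hS : S.PosSemidef) {c : ℝ}
    (hc : 0 ≤ c) : (c • S).PosSemidef := by
  constructor
  · unfold Matrix.IsHermitian at *
    rw [conjTranspose_smul, hS.1]
    simp
  · intro v
    exact (hS.smul hc).2 v

lemma sq_psd_bound {ι : Type} [Fintype ι] [DecidableEq ι] (S : Matrix ι ι ℝ) (lam : ℝ)
    (hlam : 0 ≤ lam) (hS : S.PosSemidef) (hle : ((lam • (1 : Matrix ι ι ℝ)) - S).PosSemidef) :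
    (((lam^2) • (1 : Matrix ι ι ℝ)) - S * S).PosSemidef := by
  obtain ⟨R, hherm, hmul⟩ : ∃ R : Matrix ι ι ℝ, Rᴴ = R ∧ R * R = S :=
    by
      open scoped MatrixOrder in
      obtain ⟨X, hX, -, hXS⟩ := CFC.exists_sqrt_of_isSelfAdjoint_of_quasispectrumRestricts
        hS.isHermitian (QuasispectrumRestricts.nnreal_of_nonneg hS.nonneg)
      exact ⟨X, hX.star_eq, hXS⟩
  have h2 : (Rᴴ * ((lam • (1 : Matrix ι ι ℝ)) - S) * R).PosSemidef :=
    hle.conjTranspose_mul_mul_same R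
  have heq : Rᴴ * ((lam • (1 : Matrix ι ι ℝ)) - S) * R = lam • S - S * S := by
    rw [hherm, ← hmul]
    rw [Matrix.mul_sub, Matrix.sub_mul]
    congr 1
    · rw [Matrix.mul_smul, Matrix.mul_one, Matrix.smul_mul]
    · noncomm_ring
  rw [heq] at h2
  have h3 := (psd_smul' hle hlam).add h2
  convert h3 using 1
  rw [smul_sub, smul_smul]
  ring_nf
  abel

lemma norm_le_of_psd_le {ι : Type} [Fintype ι] [DecidableEq ι] (S : Matrix ι ι ℝ) (lam : ℝ)
    (hlam : 0 ≤ lam) (hS : S.PosSemidef) (hle : ((lam • (1 : Matrix ι ι ℝ)) - S).PosSemidef) :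
    ‖S‖ ≤ lam := by
  rw [Matrix.l2_opNorm_def]
  refine ContinuousLinearMap.opNorm_le_bound _ hlam fun v => ?_
  show ‖(Matrix.toEuclideanLin S).toContinuousLinearMap v‖ ≤ lam * ‖v‖
  have hsq := sq_psd_bound S lam hlam hS hle
  set w : ι → ℝ := WithLp.equiv 2 (ι → ℝ) v with hw
  have hkey := hsq.dotProduct_mulVec_nonneg w
  have hsym : Sᵀ = S := hS.1
  have h1 : (star w) ⬝ᵥ (((lam^2) • (1 : Matrix ι ι ℝ) - S * S) *ᵥ w)
      = lam^2 * (w ⬝ᵥ w) - (S *ᵥ w) ⬝ᵥ (S *ᵥ w) := by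
    rw [Matrix.sub_mulVec, dotProduct_sub, smul_mulVec, Matrix.one_mulVec,
      dotProduct_smul, ← Matrix.mulVec_mulVec, Matrix.dotProduct_mulVec (star w)]
    have hstar : star w = w := rfl
    rw [hstar]
    have hvm : w ᵥ* S = S *ᵥ w := by rw [← Matrix.mulVec_transpose, hsym]
    rw [hvm]
    rfl
  rw [h1] at hkey
  have hv2 : ‖v‖^2 = w ⬝ᵥ w := by
    rw [← real_inner_self_eq_norm_sq]
    rfl
  have hSv : ‖(Matrix.toEuclideanLin S).toContinuousLinearMap v‖^2 = (S *ᵥ w) ⬝ᵥ (S *ᵥ w) := by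
    rw [← real_inner_self_eq_norm_sq]
    rfl
  have hnn : (0:ℝ) ≤ ‖(Matrix.toEuclideanLin S).toContinuousLinearMap v‖ := norm_nonneg _
  have h2 : ‖(Matrix.toEuclideanLin S).toContinuousLinearMap v‖^2 ≤ (lam * ‖v‖)^2 := by
    rw [hSv, mul_pow, hv2]; linarith
  calc ‖(Matrix.toEuclideanLin S).toContinuousLinearMap v‖
      = Real.sqrt (‖(Matrix.toEuclideanLin S).toContinuousLinearMap v‖^2) :=
        (Real.sqrt_sq hnn).symm
    _ ≤ Real.sqrt ((lam * ‖v‖)^2) := Real.sqrt_le_sqrt h2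
    _ = lam * ‖v‖ := Real.sqrt_sq (by positivity)

/-- The stacked matrix `[I | A | B]`. -/
def stackM {n m : ℕ} (A : Matrix (Fin n) (Fin n) ℝ) (B : Matrix (Fin n) (Fin m) ℝ) :
    Matrix (Fin n) (Fin n ⊕ (Fin n ⊕ Fin m)) ℝ :=
  Matrix.of fun i => Sum.elim ((1 : Matrix (Fin n) (Fin n) ℝ) i) (Sum.elim (A i) (B i))

lemma stackM_mulVec {n m : ℕ} (xdot x : ℝ → Fin n → ℝ) (u : ℝ → Fin m → ℝ)
    (A : Matrix (Fin n) (Fin n) ℝ) (B : Matrix (Fin n) (Fin m) ℝ) (t : ℝ) :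
    (stackM A B) *ᵥ (xiSig xdot x u t) = noiseSig xdot x u A B t := by
  funext i
  simp [stackM, xiSig, noiseSig, Matrix.mulVec, dotProduct, Fintype.sum_sum_type,
    Matrix.one_apply, ite_mul, mul_neg, Finset.sum_ite_eq', sub_eq_add_neg,
    Finset.sum_neg_distrib]
  ring

lemma vecMulVec_mulVec {ι κ : Type} [Fintype ι] [Fintype κ] (M : Matrix ι κ ℝ)
    (v w : κ → ℝ) :
    Matrix.vecMulVec (M *ᵥ v) (M *ᵥ w) = M * Matrix.vecMulVec v w * Mᵀ := by
  ext i j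
  simp only [Matrix.vecMulVec_apply, Matrix.mul_apply, Matrix.mulVec, dotProduct,
    Matrix.transpose_apply]
  rw [Finset.sum_mul_sum, Finset.sum_comm]
  exact Finset.sum_congr rfl fun b _ => by
    rw [Finset.sum_mul]
    exact Finset.sum_congr rfl fun a _ => by ring

lemma stackM_mul_transpose {n m : ℕ} (A : Matrix (Fin n) (Fin n) ℝ)
    (B : Matrix (Fin n) (Fin m) ℝ) :
    (stackM A B) * (stackM A B)ᵀ = 1 + (A * Aᵀ + B * Bᵀ) := by
  ext i j
  simp [stackM, Matrix.mul_apply, Fintype.sum_sum_type, Matrix.transpose_apply,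
    Matrix.one_apply, ite_mul, Finset.sum_ite_eq]

lemma opNorm_conj_le {n' : ℕ} {ι : Type} [Fintype ι] [DecidableEq ι]
    (M : Matrix (Fin n') ι ℝ) (X : Matrix ι ι ℝ) (lam : ℝ)
    (h : ‖M * Mᵀ‖ ≤ lam) :
    opNorm (M * X * Mᵀ) ≤ lam * opNorm X := by
  rw [opNorm_eq_l2norm, opNorm_eq_l2norm]
  have hMt : ‖Mᵀ‖ = ‖M‖ := by
    rw [← Matrix.conjTranspose_eq_transpose_of_trivial]
    exact Matrix.l2_opNorm_conjTranspose M
  have hsq : ‖M‖ * ‖M‖ = ‖M * Mᵀ‖ := by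
    have := Matrix.l2_opNorm_conjTranspose_mul_self Mᵀ
    rw [Matrix.conjTranspose_eq_transpose_of_trivial, Matrix.transpose_transpose] at this
    rw [this, hMt]
  have h1 : ‖M * X * Mᵀ‖ ≤ ‖M * X‖ * ‖Mᵀ‖ := Matrix.l2_opNorm_mul _ _
  have h2 : ‖M * X‖ ≤ ‖M‖ * ‖X‖ := Matrix.l2_opNorm_mul _ _
  have hXnn : (0:ℝ) ≤ ‖X‖ := norm_nonneg _
  have hMnn : (0:ℝ) ≤ ‖Mᵀ‖ := norm_nonneg _
  calc ‖M * X * Mᵀ‖ ≤ ‖M * X‖ * ‖Mᵀ‖ := h1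
    _ ≤ (‖M‖ * ‖X‖) * ‖Mᵀ‖ := by nlinarith
    _ = (‖M‖ * ‖M‖) * ‖X‖ := by rw [hMt]; ring
    _ = ‖M * Mᵀ‖ * ‖X‖ := by rw [hsq]
    _ ≤ lam * ‖X‖ := by nlinarith

theorem stmt14
    {n m : ℕ} (T : ℝ) (hT : 0 < T)
    (x xdot : ℝ → Fin n → ℝ) (u : ℝ → Fin m → ℝ)
    (Q : Matrix (Fin n) (Fin n) ℝ) (hQ : Q.PosSemidef)
    (hxdotL2 : MeasureTheory.MemLp xdot 2 (MeasureTheory.volume.restrict (Set.Icc (0:ℝ) T)))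
    (huL2 : MeasureTheory.MemLp u 2 (MeasureTheory.volume.restrict (Set.Icc (0:ℝ) T)))
    (hAC : ∀ t ∈ Set.Icc (0:ℝ) T, ∀ i, x t i = x 0 i + ∫ s in (0:ℝ)..t, xdot s i)
    (As : Matrix (Fin n) (Fin n) ℝ) (Bs : Matrix (Fin n) (Fin m) ℝ)
    (htrue : (As, Bs) ∈ SigmaCont T xdot x u Q)
    (lam : ℝ) (hlam : 1 ≤ lam)
    (hbd : ∀ AB ∈ SigmaCont T xdot x u Q,
      loewnerLT (AB.1 * AB.1.transpose + AB.2 * AB.2.transpose)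
        ((lam - 1) • (1 : Matrix (Fin n) (Fin n) ℝ)))
    (L : ℝ) (hL : 0 ≤ L)
    (hxi : TotalSqVarLE T (xiSig xdot x u) (L * T / 2)) :
    SigmaCont T xdot x u Q ⊆ Nset T (lam * L) xdot x u := by
  intro AB hAB
  intro s hs
  obtain ⟨N, tt, hmono, h0, hTlast, hsum⟩ := hs
  set A := AB.1 with hA
  set B := AB.2 with hB
  set M := stackM A B with hM
  -- bound on ‖M Mᵀ‖
  have hbd' := hbd AB hAB
  have hSpsd : (M * Mᵀ).PosSemidef := by
    have := Matrix.posSemidef_self_mul_conjTranspose M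
    rwa [Matrix.conjTranspose_eq_transpose_of_trivial] at this
  have hle : ((lam • (1 : Matrix (Fin n) (Fin n) ℝ)) - M * Mᵀ).PosSemidef := by
    have heq : (lam • (1 : Matrix (Fin n) (Fin n) ℝ)) - M * Mᵀ
        = ((lam - 1) • (1 : Matrix (Fin n) (Fin n) ℝ)) - (A * Aᵀ + B * Bᵀ) := by
      rw [hM, stackM_mul_transpose, sub_smul, one_smul]
      abel
    rw [heq]
    exact hbd'.posSemidef
  have hnorm : ‖M * Mᵀ‖ ≤ lam := norm_le_of_psd_le _ _ (by linarith) hSpsd hle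
  -- partition sum for xi
  have hximem : (∑ i : Fin N,
      opNorm (Matrix.vecMulVec (xiSig xdot x u (tt i.succ)) (xiSig xdot x u (tt i.succ)) -
        Matrix.vecMulVec (xiSig xdot x u (tt i.castSucc)) (xiSig xdot x u (tt i.castSucc))))
      ∈ partitionSums T (xiSig xdot x u) :=
    ⟨N, tt, hmono, h0, hTlast, rfl⟩
  have hxile := hxi _ hximem
  have hterm : ∀ i : Fin N,
      opNorm (Matrix.vecMulVec (noiseSig xdot x u A B (tt i.succ))
          (noiseSig xdot x u A B (tt i.succ)) -
        Matrix.vecMulVec (noiseSig xdot x u A B (tt i.castSucc))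
          (noiseSig xdot x u A B (tt i.castSucc)))
      ≤ lam * opNorm
        (Matrix.vecMulVec (xiSig xdot x u (tt i.succ)) (xiSig xdot x u (tt i.succ)) -
          Matrix.vecMulVec (xiSig xdot x u (tt i.castSucc)) (xiSig xdot x u (tt i.castSucc))) := by
    intro i
    have e1 : Matrix.vecMulVec (noiseSig xdot x u A B (tt i.succ))
          (noiseSig xdot x u A B (tt i.succ)) -
        Matrix.vecMulVec (noiseSig xdot x u A B (tt i.castSucc))
          (noiseSig xdot x u A B (tt i.castSucc))
        = M * (Matrix.vecMulVec (xiSig xdot x u (tt i.succ)) (xiSig xdot x u (tt i.succ)) -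
            Matrix.vecMulVec (xiSig xdot x u (tt i.castSucc))
              (xiSig xdot x u (tt i.castSucc))) * Mᵀ := by
      rw [Matrix.mul_sub, Matrix.sub_mul,
        ← _root_.vecMulVec_mulVec M, ← _root_.vecMulVec_mulVec M,
        stackM_mulVec xdot x u A B, stackM_mulVec xdot x u A B]
    rw [e1]
    exact opNorm_conj_le M _ lam hnorm
  have hsum' : s ≤ lam * (∑ i : Fin N,
      opNorm (Matrix.vecMulVec (xiSig xdot x u (tt i.succ)) (xiSig xdot x u (tt i.succ)) -
        Matrix.vecMulVec (xiSig xdot x u (tt i.castSucc)) (xiSig xdot x u (tt i.castSucc)))) := by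
    rw [hsum, Finset.mul_sum]
    exact Finset.sum_le_sum fun i _ => hterm i
  have hlam0 : (0:ℝ) ≤ lam := by linarith
  calc s ≤ lam * (∑ i : Fin N,
      opNorm (Matrix.vecMulVec (xiSig xdot x u (tt i.succ)) (xiSig xdot x u (tt i.succ)) -
        Matrix.vecMulVec (xiSig xdot x u (tt i.castSucc)) (xiSig xdot x u (tt i.castSucc)))) :=
      hsum'
    _ ≤ lam * (L * T / 2) := by nlinarith
    _ = lam * L * T / 2 := by ring
end

section
/- Suppose the data (x,u) satisfy the standing data assumptions, that ∫_0^T (x(t); u(t))(x(t); u(t))^T dt is positive definite, and let λ ≥ 1 be such that A·A^T + B·B^T < (λ−1)·I_n (strict Loewner inequality) for every (A,B) ∈ Σ(Q). Let δ > 0 with T/δ a positive integer and L ≥ 0, and assume there exist K ∈ ℝ^{m×n}, a symmetric positive definite P ∈ ℝ^{n×n}, and β > (1/2)δTL such that the sampled-data LMI at stepsize δ holds. If either (i) the stacked signal ξ(t) := (ẋ(t); −x(t); −u(t)) is (L/λ)-square Lipschitz, or (ii) V_0^T(ξ) ≤ (1/2)(L/λ)T, then the data (x,u) are informative for quadratic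 stabilization: there exist K' ∈ ℝ^{m×n} and a symmetric positive definite P' ∈ ℝ^{n×n} such that (A+BK')P' + P'(A+BK')^T is negative definite for every (A,B) ∈ Σ(Q). -/
open MeasureTheory Matrix

lemma euclNorm_eq {ι : Type} [Fintype ι] (v : ι → ℝ) :
    euclNorm v = ‖(WithLp.equiv 2 (ι → ℝ)).symm v‖ := by
  rw [EuclideanSpace.norm_eq, euclNorm]
  congr 1; apply Finset.sum_congr rfl; intro i _
  simp [sq_abs, WithLp.equiv_symm_apply]

lemma euclNorm_nonneg {ι : Type} [Fintype ι] (v : ι → ℝ) : 0 ≤ euclNorm v :=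
  Real.sqrt_nonneg _

lemma euclNorm_mul_self {ι : Type} [Fintype ι] (v : ι → ℝ) :
    euclNorm v * euclNorm v = ∑ i, v i ^ 2 :=
  Real.mul_self_sqrt (by positivity)

lemma bilin_le_opNorm {ι : Type} [Fintype ι] [DecidableEq ι] (M : Matrix ι ι ℝ) (a b : ι → ℝ) :
    a ⬝ᵥ (M *ᵥ b) ≤ opNorm M * euclNorm a * euclNorm b := by
  set a' : EuclideanSpace ℝ ι := (WithLp.equiv 2 (ι → ℝ)).symm a with ha'
  set b' : EuclideanSpace ℝ ι := (WithLp.equiv 2 (ι → ℝ)).symm b with hb'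
  have h1 : a ⬝ᵥ (M *ᵥ b) =
      inner ℝ a' ((LinearMap.toContinuousLinearMap (Matrix.toEuclideanLin M)) b') := by
    simp only [LinearMap.coe_toContinuousLinearMap']
    rw [hb', WithLp.equiv_symm_apply, Matrix.toEuclideanLin_apply_piLp_toLp, ha',
      WithLp.equiv_symm_apply, EuclideanSpace.inner_toLp_toLp]
    simp [dotProduct, mul_comm]
  rw [h1]
  calc inner ℝ a' ((LinearMap.toContinuousLinearMap (Matrix.toEuclideanLin M)) b')
      ≤ ‖a'‖ * ‖(LinearMap.toContinuousLinearMap (Matrix.toEuclideanLin M)) b'‖ :=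
        real_inner_le_norm _ _
    _ ≤ ‖a'‖ * (opNorm M * ‖b'‖) := by
        exact mul_le_mul_of_nonneg_left (ContinuousLinearMap.le_opNorm _ _) (norm_nonneg _)
    _ = opNorm M * euclNorm a * euclNorm b := by rw [euclNorm_eq, euclNorm_eq]; ring

lemma dot_vecMulVec {ι : Type} [Fintype ι] (v a b : ι → ℝ) :
    a ⬝ᵥ ((Matrix.vecMulVec v v) *ᵥ b) = (v ⬝ᵥ a) * (v ⬝ᵥ b) := by
  simp only [Matrix.mulVec, Matrix.vecMulVec_apply, dotProduct, Finset.sum_mul,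
    Finset.mul_sum]
  rw [Finset.sum_comm]
  apply Finset.sum_congr rfl; intro j _
  apply Finset.sum_congr rfl; intro i _
  ring

/-- Partition-sum bound for a scalar function. -/
def PartBound (T : ℝ) (g : ℝ → ℝ) (C : ℝ) : Prop :=
  ∀ (N : ℕ) (t : Fin (N + 1) → ℝ), Monotone t → t 0 = 0 → t (Fin.last N) = T →
    (∑ i : Fin N, |g (t i.succ) - g (t i.castSucc)|) ≤ C

lemma PartBound.integrableOn {T C : ℝ} {g : ℝ → ℝ} (hT : 0 < T) (h : PartBound T g C) :
    IntegrableOn g (Set.Ioc (0:ℝ) T) volume := by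
  have hbv : BoundedVariationOn g (Set.Icc (0:ℝ) T) := by
    rw [BoundedVariationOn]
    have hle : eVariationOn g (Set.Icc (0:ℝ) T) ≤ ENNReal.ofReal C := by
      rw [eVariationOn]
      apply iSup_le
      rintro ⟨n, u, hu, us⟩
      -- extend the partition by 0 at the start and T at the end
      set v : ℕ → ℝ := fun k => if k = 0 then 0 else if k ≤ n + 1 then u (k - 1) else T with hv
      have hv0 : v 0 = 0 := rfl
      have hvmem : ∀ k, v k ∈ Set.Icc (0:ℝ) T := by
        intro k
        by_cases h0 : k = 0
        · simp [hv, h0, le_of_lt hT]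
        · by_cases h1 : k ≤ n + 1
          · simp only [hv, h0, h1, if_false, if_true]; exact us _
          · simp [hv, h0, h1, le_of_lt hT]
      have hvmono : Monotone v := by
        apply monotone_nat_of_le_succ
        intro k
        by_cases h0 : k = 0
        · subst h0; exact (hvmem 1).1
        · by_cases h1 : k + 1 ≤ n + 1
          · have h1' : k ≤ n + 1 := Nat.le_of_succ_le h1
            simp only [hv, h0, Nat.succ_ne_zero, h1, h1', if_false, if_true]
            exact hu (by omega)
          · by_cases h2 : k ≤ n + 1
            · simp only [hv, h0, Nat.succ_ne_zero, h1, h2, if_false, if_true]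
              exact (us _).2
            · simp [hv, h0, Nat.succ_ne_zero, h1, h2]
      have hvlast : v (n + 2) = T := by simp [hv]
      -- the Fin partition
      set t : Fin (n + 2 + 1) → ℝ := fun j => v j.val with ht
      have h1 := h (n + 2) t (fun i j hij => hvmono hij) hv0 (by simp [ht, hvlast, Fin.last])
      have h2 : (∑ i ∈ Finset.range n, edist (g (u (i + 1))) (g (u i))) =
          ENNReal.ofReal (∑ i ∈ Finset.range n, |g (u (i + 1)) - g (u i)|) := by
        rw [ENNReal.ofReal_sum_of_nonneg (fun i _ => abs_nonneg _)]
        apply Finset.sum_congr rfl; intro i _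
        rw [edist_dist, Real.dist_eq]
      rw [h2]
      apply ENNReal.ofReal_le_ofReal
      refine le_trans ?_ h1
      have h3 : (∑ i : Fin (n + 2), |g (t i.succ) - g (t i.castSucc)|) =
          ∑ j ∈ Finset.range (n + 2), |g (v (j + 1)) - g (v j)| := by
        rw [← Fin.sum_univ_eq_sum_range (fun j => |g (v (j + 1)) - g (v j)|) (n + 2)]
        apply Finset.sum_congr rfl; intro i _
        simp [ht, Fin.val_succ, Fin.coe_castSucc]
      rw [h3]
      calc (∑ i ∈ Finset.range n, |g (u (i + 1)) - g (u i)|)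
          = ∑ j ∈ Finset.Ico 1 (n + 1), |g (v (j + 1)) - g (v j)| := by
            rw [Finset.sum_Ico_eq_sum_range]
            simp only [Nat.add_sub_cancel]
            apply Finset.sum_congr rfl
            intro i hi
            rw [Finset.mem_range] at hi
            have e1 : v (1 + i + 1) = u (i + 1) := by
              simp only [hv]; rw [if_neg (by omega), if_pos (by omega)]
              congr 1; omega
            have e2 : v (1 + i) = u i := by
              simp only [hv]; rw [if_neg (by omega), if_pos (by omega)]
              congr 1; omega
            rw [e1, e2]
        _ ≤ ∑ j ∈ Finset.range (n + 2), |g (v (j + 1)) - g (v j)| := by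
            apply Finset.sum_le_sum_of_subset_of_nonneg
            · intro j hj
              rw [Finset.mem_Ico] at hj; rw [Finset.mem_range]; omega
            · intro _ _ _; exact abs_nonneg _
    intro hinf
    rw [hinf, top_le_iff] at hle
    exact ENNReal.ofReal_ne_top hle
  have hlbv : LocallyBoundedVariationOn g (Set.Icc (0:ℝ) T) :=
    fun a b _ _ => hbv.mono Set.inter_subset_left
  obtain ⟨p, q, hp, hq, hpq⟩ := hlbv.exists_monotoneOn_sub_monotoneOn
  have hip : IntegrableOn p (Set.Icc (0:ℝ) T) volume :=
    hp.integrableOn_isCompact isCompact_Icc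
  have hiq : IntegrableOn q (Set.Icc (0:ℝ) T) volume :=
    hq.integrableOn_isCompact isCompact_Icc
  have : IntegrableOn g (Set.Icc (0:ℝ) T) volume := by
    rw [hpq]; exact hip.sub hiq
  exact this.mono_set Set.Ioc_subset_Icc_self

/-- Splitting the integral over `Ioc 0 (N*δ)` into pieces. -/
lemma integral_split {g : ℝ → ℝ} {δ : ℝ} (hδ : 0 < δ) (N : ℕ)
    (hg : IntegrableOn g (Set.Ioc (0:ℝ) (N * δ)) volume) :
    ∫ t in Set.Ioc (0:ℝ) (N * δ), g t =
      ∑ k ∈ Finset.range N, ∫ t in Set.Ioc ((k:ℝ) * δ) ((k + 1 : ℕ) * δ), g t := by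
  induction N with
  | zero => simp
  | succ M ih =>
    have hsub : Set.Ioc (0:ℝ) (M * δ) ⊆ Set.Ioc (0:ℝ) ((M + 1 : ℕ) * δ) := by
      apply Set.Ioc_subset_Ioc le_rfl
      push_cast; nlinarith
    have hsub2 : Set.Ioc ((M:ℝ) * δ) ((M + 1 : ℕ) * δ) ⊆ Set.Ioc (0:ℝ) ((M + 1 : ℕ) * δ) := by
      apply Set.Ioc_subset_Ioc ?_ le_rfl
      positivity
    have hunion : Set.Ioc (0:ℝ) ((M:ℝ) * δ) ∪ Set.Ioc ((M:ℝ) * δ) ((M + 1 : ℕ) * δ)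
        = Set.Ioc (0:ℝ) ((M + 1 : ℕ) * δ) := by
      apply Set.Ioc_union_Ioc_eq_Ioc
      · positivity
      · push_cast; nlinarith
    rw [Finset.sum_range_succ, ← ih (hg.mono_set hsub), ← hunion]
    rw [setIntegral_union]
    · exact Set.Ioc_disjoint_Ioc_of_le le_rfl
    · exact measurableSet_Ioc
    · exact hg.mono_set hsub
    · exact hg.mono_set hsub2

lemma integral_sub_linear {a b : ℝ} (hab : a ≤ b) :
    ∫ t in Set.Ioc a b, (t - a) = (b - a) ^ 2 / 2 := by
  rw [← intervalIntegral.integral_of_le hab]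
  rw [intervalIntegral.integral_sub intervalIntegral.intervalIntegrable_id
    (intervalIntegrable_const)]
  simp [integral_id]
  ring

/-- Sampling bound, Lipschitz case. -/
lemma samp_lip {g : ℝ → ℝ} {δ T K₀ : ℝ} {N : ℕ} (hδ : 0 < δ) (hK : 0 ≤ K₀) (hTN : T = N * δ)
    (hint : IntegrableOn g (Set.Ioc (0:ℝ) T) volume)
    (hg : ∀ t₁ ∈ Set.Icc (0:ℝ) T, ∀ t₂ ∈ Set.Icc (0:ℝ) T, |g t₁ - g t₂| ≤ K₀ * |t₁ - t₂|) :
    δ * ∑ k ∈ Finset.range N, g ((k : ℝ) * δ) ≤ (∫ t in Set.Ioc (0:ℝ) T, g t) + K₀ * T * δ / 2 := by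
  subst hTN
  rw [integral_split hδ N hint]
  have key : ∀ k ∈ Finset.range N,
      δ * g ((k:ℝ) * δ) ≤ (∫ t in Set.Ioc ((k:ℝ) * δ) ((k + 1 : ℕ) * δ), g t) + K₀ * δ ^ 2 / 2 := by
    intro k hk
    rw [Finset.mem_range] at hk
    have h0k : (0:ℝ) ≤ (k:ℝ) * δ := by positivity
    have hkk : ((k:ℝ)) * δ ≤ ((k+1:ℕ):ℝ) * δ := by push_cast; nlinarith
    have hkN : ((k+1:ℕ):ℝ) * δ ≤ (N:ℝ) * δ := by
      have : ((k+1:ℕ):ℝ) ≤ (N:ℝ) := by exact_mod_cast hk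
      nlinarith
    have hsub : Set.Ioc ((k:ℝ) * δ) ((k+1:ℕ) * δ) ⊆ Set.Ioc (0:ℝ) ((N:ℝ)*δ) :=
      Set.Ioc_subset_Ioc h0k hkN
    have hgi : IntegrableOn g (Set.Ioc ((k:ℝ) * δ) ((k+1:ℕ) * δ)) volume := hint.mono_set hsub
    have hmono : ∀ t ∈ Set.Ioc ((k:ℝ) * δ) ((k+1:ℕ) * δ),
        g ((k:ℝ) * δ) - g t ≤ K₀ * (t - (k:ℝ) * δ) := by
      intro t ht
      have ht1 : t ∈ Set.Icc (0:ℝ) ((N:ℝ)*δ) := ⟨le_of_lt (lt_of_le_of_lt h0k ht.1),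
        le_trans ht.2 hkN⟩
      have ht2 : (k:ℝ) * δ ∈ Set.Icc (0:ℝ) ((N:ℝ)*δ) := ⟨h0k, le_trans hkk hkN⟩
      have := hg _ ht2 _ ht1
      have habs : |(k:ℝ) * δ - t| = t - (k:ℝ)*δ := by
        rw [abs_sub_comm, abs_of_nonneg]; linarith [ht.1]
      rw [habs] at this
      calc g ((k:ℝ) * δ) - g t ≤ |g ((k:ℝ)*δ) - g t| := le_abs_self _
        _ ≤ K₀ * (t - (k:ℝ)*δ) := this
    have hI : ∫ t in Set.Ioc ((k:ℝ) * δ) ((k+1:ℕ) * δ), (g ((k:ℝ)*δ) - g t) ≤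
        ∫ t in Set.Ioc ((k:ℝ) * δ) ((k+1:ℕ) * δ), K₀ * (t - (k:ℝ)*δ) := by
      apply setIntegral_mono_on
      · exact (integrableOn_const measure_Ioc_lt_top.ne).sub hgi
      · exact (continuous_const.mul (continuous_id.sub continuous_const)).integrableOn_Ioc
      · exact measurableSet_Ioc
      · exact hmono
    rw [integral_sub (show IntegrableOn (fun _ : ℝ => g ((k:ℝ)*δ)) (Set.Ioc ((k:ℝ) * δ) ((k+1:ℕ) * δ)) volume from integrableOn_const measure_Ioc_lt_top.ne) hgi] at hI
    rw [MeasureTheory.integral_const, MeasureTheory.integral_const_mul, integral_sub_linear hkk,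
      measureReal_def, Measure.restrict_apply_univ, Real.volume_Ioc] at hI
    have hmeas : ((k+1:ℕ):ℝ) * δ - (k:ℝ)*δ = δ := by push_cast; ring
    rw [hmeas] at hI
    rw [ENNReal.toReal_ofReal (le_of_lt hδ)] at hI
    have : δ * g ((k:ℝ)*δ) - ∫ t in Set.Ioc ((k:ℝ) * δ) ((k+1:ℕ) * δ), g t ≤ K₀ * δ^2/2 := by
      have := hI
      rw [smul_eq_mul] at this
      nlinarith [this]
    linarith
  calc δ * ∑ k ∈ Finset.range N, g ((k : ℝ) * δ)
      = ∑ k ∈ Finset.range N, δ * g ((k:ℝ) * δ) := by rw [Finset.mul_sum]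
    _ ≤ ∑ k ∈ Finset.range N, ((∫ t in Set.Ioc ((k:ℝ) * δ) ((k + 1 : ℕ) * δ), g t)
          + K₀ * δ ^ 2 / 2) := Finset.sum_le_sum key
    _ = (∑ k ∈ Finset.range N, ∫ t in Set.Ioc ((k:ℝ) * δ) ((k + 1 : ℕ) * δ), g t)
          + N * (K₀ * δ ^ 2 / 2) := by rw [Finset.sum_add_distrib, Finset.sum_const,
            Finset.card_range, nsmul_eq_mul]
    _ ≤ _ := by
        apply add_le_add le_rfl
        have : (N:ℝ) * (K₀ * δ^2/2) = K₀ * ((N:ℝ)*δ) * δ / 2 := by ring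
        rw [this]

/-- Sampling bound, bounded-variation case. -/
lemma samp_tv {g : ℝ → ℝ} {δ T C : ℝ} {N : ℕ} (hδ : 0 < δ) (hN : 0 < N) (hTN : T = N * δ)
    (hint : IntegrableOn g (Set.Ioc (0:ℝ) T) volume)
    (hpb : PartBound T g C) :
    δ * ∑ k ∈ Finset.range N, g ((k:ℝ) * δ) ≤ (∫ t in Set.Ioc (0:ℝ) T, g t) + δ * C := by
  apply le_of_forall_pos_le_add
  intro ε hε
  set ε' : ℝ := ε / (N * δ) with hε'def
  have hε' : 0 < ε' := by positivity
  -- choose good points in each interval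
  have hex : ∀ k : ℕ, ∃ t : ℝ, k < N →
      t ∈ Set.Ioc ((k:ℝ)*δ) ((k+1:ℕ)*δ) ∧
        δ * g t ≤ (∫ s in Set.Ioc ((k:ℝ)*δ) ((k+1:ℕ)*δ), g s) + δ * ε' := by
    intro k
    by_cases hk : k < N
    · have h0k : (0:ℝ) ≤ (k:ℝ) * δ := by positivity
      have hkk : ((k:ℝ)) * δ < ((k+1:ℕ):ℝ) * δ := by push_cast; nlinarith
      have hkN : ((k+1:ℕ):ℝ) * δ ≤ (N:ℝ) * δ := by
        have : ((k+1:ℕ):ℝ) ≤ (N:ℝ) := by exact_mod_cast hk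
        nlinarith
      have hgi : IntegrableOn g (Set.Ioc ((k:ℝ)*δ) ((k+1:ℕ)*δ)) volume := by
        apply hint.mono_set
        rw [hTN]
        exact Set.Ioc_subset_Ioc h0k hkN
      have key : ∃ t ∈ Set.Ioc ((k:ℝ)*δ) ((k+1:ℕ)*δ),
          δ * g t ≤ (∫ s in Set.Ioc ((k:ℝ)*δ) ((k+1:ℕ)*δ), g s) + δ * ε' := by
        set X : ℝ := (∫ s in Set.Ioc ((k:ℝ)*δ) ((k+1:ℕ)*δ), g s) + δ * ε' with hX
        by_contra hcon
        push_neg at hcon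
        have hall : ∀ t ∈ Set.Ioc ((k:ℝ)*δ) ((k+1:ℕ)*δ), X / δ ≤ g t := by
          intro t ht
          have := hcon t ht
          rw [div_le_iff₀ hδ]
          nlinarith
        have hI : (∫ _ in Set.Ioc ((k:ℝ)*δ) ((k+1:ℕ)*δ), (X/δ)) ≤
            ∫ s in Set.Ioc ((k:ℝ)*δ) ((k+1:ℕ)*δ), g s := by
          apply setIntegral_mono_on
          · exact integrableOn_const measure_Ioc_lt_top.ne
          · exact hgi
          · exact measurableSet_Ioc
          · exact hall
        rw [MeasureTheory.integral_const, measureReal_def, Measure.restrict_apply_univ, Real.volume_Ioc,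
          ENNReal.toReal_ofReal (by linarith), smul_eq_mul] at hI
        have hvol : (((k+1:ℕ):ℝ) * δ - (k:ℝ)*δ) = δ := by push_cast; ring
        rw [hvol] at hI
        rw [mul_div_cancel₀ _ (ne_of_gt hδ)] at hI
        have : 0 < δ * ε' := by positivity
        rw [hX] at hI
        linarith
      exact key.imp (fun t ht => fun _ => ht)
    · exact ⟨0, fun h => absurd h hk⟩
  choose tk htk using hex
  -- the interleaved partition
  set v : ℕ → ℝ := fun j =>
    if 2*N ≤ j then T else if Even j then ((j/2 : ℕ):ℝ) * δ else tk (j/2) with hv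
  have hv2k : ∀ k < N, v (2*k) = ((k:ℕ):ℝ)*δ := by
    intro k hk
    simp only [hv]
    rw [if_neg (by omega), if_pos ⟨k, (two_mul k).symm ▸ (two_mul k)⟩]
    congr 2
    omega
  have hv2k1 : ∀ k < N, v (2*k+1) = tk k := by
    intro k hk
    simp only [hv]
    rw [if_neg (by omega), if_neg (by rw [Nat.even_iff]; omega)]
    congr 1
    omega
  have hvmono : Monotone v := by
    apply monotone_nat_of_le_succ
    intro j
    by_cases h2 : 2*N ≤ j
    · simp only [hv]; rw [if_pos h2, if_pos (by omega)]
    · by_cases h3 : 2*N ≤ j + 1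
      · -- j = 2N - 1, odd
        have hj : j = 2*(N-1)+1 := by omega
        rw [hj, hv2k1 (N-1) (by omega)]
        have := (htk (N-1) (by omega)).1.2
        simp only [hv]
        rw [if_pos (by omega)]
        refine le_trans this ?_
        rw [hTN]
        have : ((N-1+1:ℕ):ℝ) = (N:ℝ) := by
          have : N - 1 + 1 = N := by omega
          rw [this]
        rw [this]
      · by_cases he : Even j
        · obtain ⟨k, hkk⟩ := he
          have hj : j = 2*k := by omega
          have hkN : k < N := by omega
          rw [hj, hv2k k hkN, (by omega : 2*k+1 = 2*k+1), hv2k1 k hkN]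
          exact le_of_lt (htk k hkN).1.1
        · obtain ⟨q, hq⟩ : Odd j := Nat.not_even_iff_odd.mp he
          have hq2 : j / 2 = q := by omega
          have hqN : q < N := by omega
          have hq1N : q + 1 < N := by omega
          rw [(by omega : j = 2*q+1), hv2k1 _ hqN, (by omega : 2*q+1+1 = 2*(q+1)),
            hv2k _ hq1N]
          have := (htk q hqN).1.2
          refine le_trans this (le_of_eq ?_)
          push_cast
          ring
  have h0 : v 0 = 0 := by
    simp only [hv]; rw [if_neg (by omega), if_pos Even.zero]; simp
  have hlast : v (2*N) = T := by simp only [hv]; rw [if_pos le_rfl]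
  have hp := hpb (2*N) (fun j => v j.val) (fun i j hij => hvmono hij) h0
    (by simpa [Fin.last] using hlast)
  have hrange : ∑ j ∈ Finset.range (2*N), |g (v (j+1)) - g (v j)| ≤ C := by
    rw [← Fin.sum_univ_eq_sum_range (fun j => |g (v (j+1)) - g (v j)|) (2*N)]
    exact le_trans (le_of_eq (Finset.sum_congr rfl (fun i _ => rfl))) hp
  have himg : ∑ k ∈ Finset.range N, |g (v (2*k+1)) - g (v (2*k))| ≤
      ∑ j ∈ Finset.range (2*N), |g (v (j+1)) - g (v j)| := by
    have heq : ∑ k ∈ Finset.range N, |g (v (2*k+1)) - g (v (2*k))| =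
        ∑ j ∈ (Finset.range N).image (fun k => 2*k), |g (v (j+1)) - g (v j)| := by
      rw [Finset.sum_image (by intro a _ b _ h; simp only at h; omega)]
    rw [heq]
    apply Finset.sum_le_sum_of_subset_of_nonneg
    · intro j hj
      simp only [Finset.mem_image, Finset.mem_range] at *
      obtain ⟨k, hk, rfl⟩ := hj
      omega
    · intros; exact abs_nonneg _
  have hvar : ∑ k ∈ Finset.range N, (g (((k:ℕ):ℝ)*δ) - g (tk k)) ≤ C := by
    refine le_trans (Finset.sum_le_sum ?_) (le_trans himg hrange)
    intro k hk
    rw [Finset.mem_range] at hk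
    rw [hv2k1 k hk, hv2k k hk, abs_sub_comm]
    exact le_abs_self _
  have hNδε : (N:ℝ) * (δ * ε') = ε := by
    rw [hε'def]
    field_simp
  calc δ * ∑ k ∈ Finset.range N, g ((k:ℝ) * δ)
      = ∑ k ∈ Finset.range N, (δ * g (tk k) + δ * (g (((k:ℕ):ℝ)*δ) - g (tk k))) := by
        rw [Finset.mul_sum]
        apply Finset.sum_congr rfl
        intro k _
        ring
    _ ≤ ∑ k ∈ Finset.range N, (((∫ s in Set.Ioc (((k:ℕ):ℝ)*δ) ((k+1:ℕ)*δ), g s) + δ * ε')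
          + δ * (g (((k:ℕ):ℝ)*δ) - g (tk k))) := by
        apply Finset.sum_le_sum
        intro k hk
        rw [Finset.mem_range] at hk
        have := (htk k hk).2
        linarith
    _ = (∑ k ∈ Finset.range N, ∫ s in Set.Ioc (((k:ℕ):ℝ)*δ) ((k+1:ℕ)*δ), g s) + (N:ℝ)*(δ*ε')
          + δ * ∑ k ∈ Finset.range N, (g (((k:ℕ):ℝ)*δ) - g (tk k)) := by
        rw [Finset.sum_add_distrib, Finset.sum_add_distrib, Finset.sum_const, Finset.card_range,
          nsmul_eq_mul, Finset.mul_sum]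
    _ ≤ (∫ t in Set.Ioc (0:ℝ) T, g t) + ε + δ * C := by
        have hintsplit : (∑ k ∈ Finset.range N, ∫ s in Set.Ioc (((k:ℕ):ℝ)*δ) ((k+1:ℕ)*δ), g s)
            = ∫ t in Set.Ioc (0:ℝ) T, g t := by
          rw [hTN] at hint ⊢
          exact (integral_split hδ N hint).symm
        rw [hintsplit, hNδε]
        have := mul_le_mul_of_nonneg_left hvar (le_of_lt hδ)
        linarith
    _ = (∫ t in Set.Ioc (0:ℝ) T, g t) + δ * C + ε := by ring


lemma psd_quad {ι : Type} [Fintype ι] {M : Matrix ι ι ℝ} (h : M.PosSemidef) (z : ι → ℝ) :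
    0 ≤ z ⬝ᵥ (M *ᵥ z) := by
  simpa using h.dotProduct_mulVec_nonneg z

lemma dot_trans {n m : ℕ} (A : Matrix (Fin n) (Fin m) ℝ) (v : Fin m → ℝ) (y : Fin n → ℝ) :
    v ⬝ᵥ (Aᵀ *ᵥ y) = (A *ᵥ v) ⬝ᵥ y := by
  simp only [dotProduct, Matrix.mulVec, Matrix.transpose_apply, Finset.sum_mul, Finset.mul_sum]
  rw [Finset.sum_comm]
  apply Finset.sum_congr rfl; intro i _
  apply Finset.sum_congr rfl; intro j _
  ring

lemma key_dot {n m : ℕ} (xdot x : ℝ → Fin n → ℝ) (u : ℝ → Fin m → ℝ)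
    (A : Matrix (Fin n) (Fin n) ℝ) (B : Matrix (Fin n) (Fin m) ℝ) (y : Fin n → ℝ) (t : ℝ) :
    xiSig xdot x u t ⬝ᵥ (Sum.elim y (Sum.elim (Aᵀ *ᵥ y) (Bᵀ *ᵥ y))) =
      noiseSig xdot x u A B t ⬝ᵥ y := by
  show (Sum.elim (xdot t) (Sum.elim (fun i => -(x t i)) (fun j => -(u t j)))) ⬝ᵥ _ = _
  rw [sumElim_dotProduct_sumElim, sumElim_dotProduct_sumElim]
  have hx : (fun i => -(x t i)) = -(x t) := rfl
  have hu : (fun j => -(u t j)) = -(u t) := rfl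
  rw [hx, hu, neg_dotProduct, neg_dotProduct, dot_trans, dot_trans]
  rw [show noiseSig xdot x u A B t = xdot t - A *ᵥ x t - B *ᵥ u t from rfl,
    sub_dotProduct, sub_dotProduct]
  ring

lemma lmiBlock_eq {n m : ℕ} (Q P : Matrix (Fin n) (Fin n) ℝ) (K : Matrix (Fin m) (Fin n) ℝ)
    (β : ℝ) :
    lmiBlock Q P K β = Matrix.fromBlocks (Q + β • (1 : Matrix (Fin n) (Fin n) ℝ))
      (Matrix.fromCols P (P * Kᵀ)) (Matrix.fromRows P (K * P)) 0 := by
  ext i j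
  rcases i with i | (i | i) <;> rcases j with j | (j | j) <;> rfl

lemma lmi_quad {n m : ℕ} (Q P : Matrix (Fin n) (Fin n) ℝ) (K : Matrix (Fin m) (Fin n) ℝ) (β : ℝ)
    (A : Matrix (Fin n) (Fin n) ℝ) (B : Matrix (Fin n) (Fin m) ℝ) (y : Fin n → ℝ) :
    (Sum.elim y (Sum.elim (Aᵀ *ᵥ y) (Bᵀ *ᵥ y))) ⬝ᵥ
        ((lmiBlock Q P K β) *ᵥ (Sum.elim y (Sum.elim (Aᵀ *ᵥ y) (Bᵀ *ᵥ y)))) =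
      y ⬝ᵥ (Q *ᵥ y) + β * (y ⬝ᵥ y) + y ⬝ᵥ (((A + B * K) * P) *ᵥ y)
        + y ⬝ᵥ ((P * (A + B * K)ᵀ) *ᵥ y) := by
  rw [lmiBlock_eq, Matrix.fromBlocks_mulVec]
  simp only [Sum.elim_comp_inl, Sum.elim_comp_inr]
  rw [Matrix.fromCols_mulVec_sumElim, Matrix.fromRows_mulVec]
  simp only [Matrix.zero_mulVec, add_zero]
  rw [sumElim_dotProduct_sumElim, sumElim_dotProduct_sumElim]
  simp only [Matrix.zero_mulVec, add_zero, Matrix.add_mulVec, Matrix.mulVec_mulVec,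
    dotProduct_add, add_dotProduct, Matrix.smul_mulVec,
    Matrix.one_mulVec, dotProduct_smul, smul_eq_mul]
  have h1 : y ⬝ᵥ (P *ᵥ (Aᵀ *ᵥ y)) = y ⬝ᵥ ((P * Aᵀ) *ᵥ y) := by rw [Matrix.mulVec_mulVec]
  have h2 : y ⬝ᵥ ((P * Kᵀ) *ᵥ (Bᵀ *ᵥ y)) = y ⬝ᵥ ((P * Kᵀ * Bᵀ) *ᵥ y) := by
    rw [Matrix.mulVec_mulVec]
  have h3 : (Aᵀ *ᵥ y) ⬝ᵥ (P *ᵥ y) = y ⬝ᵥ ((A * P) *ᵥ y) := by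
    rw [Matrix.mulVec_transpose, ← Matrix.dotProduct_mulVec, Matrix.mulVec_mulVec]
  have h4 : (Bᵀ *ᵥ y) ⬝ᵥ ((K * P) *ᵥ y) = y ⬝ᵥ ((B * (K * P)) *ᵥ y) := by
    rw [Matrix.mulVec_transpose, ← Matrix.dotProduct_mulVec, Matrix.mulVec_mulVec]
  rw [h3, h4]
  simp only [Matrix.transpose_add, Matrix.transpose_mul, Matrix.add_mul, Matrix.mul_add,
    Matrix.add_mulVec, dotProduct_add, Matrix.mul_assoc]
  ring


lemma sum_mulVec' {ι : Type} [Fintype ι] {σ : Type} (s : Finset σ) (M : σ → Matrix ι ι ℝ)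
    (z : ι → ℝ) : (∑ k ∈ s, M k) *ᵥ z = ∑ k ∈ s, (M k) *ᵥ z := by
  ext i
  simp only [Matrix.mulVec, dotProduct, Finset.sum_apply, Matrix.sum_apply, Finset.sum_mul]
  rw [Finset.sum_comm]

lemma dot_sum' {ι : Type} [Fintype ι] {σ : Type} (s : Finset σ) (f : σ → ι → ℝ) (z : ι → ℝ) :
    z ⬝ᵥ (∑ k ∈ s, f k) = ∑ k ∈ s, z ⬝ᵥ (f k) := by
  simp only [dotProduct, Finset.sum_apply, Finset.mul_sum]
  rw [Finset.sum_comm]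

lemma sampled_quad {ι : Type} [Fintype ι] (δ : ℝ) (N : ℕ) (v : ℝ → ι → ℝ) (z : ι → ℝ) :
    z ⬝ᵥ ((sampledGram δ N v) *ᵥ z) = δ * ∑ k ∈ Finset.range N, (v ((k:ℝ) * δ) ⬝ᵥ z)^2 := by
  rw [sampledGram, Matrix.smul_mulVec, dotProduct_smul, smul_eq_mul]
  congr 1
  rw [sum_mulVec', dot_sum']
  apply Finset.sum_congr rfl
  intro k _
  rw [dot_vecMulVec, sq]

lemma opNorm_neg {ι : Type} [Fintype ι] [DecidableEq ι] (M : Matrix ι ι ℝ) :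
    opNorm (-M) = opNorm M := by
  rw [opNorm, opNorm, map_neg, map_neg, norm_neg]

lemma bilin_abs_le {ι : Type} [Fintype ι] [DecidableEq ι] (M : Matrix ι ι ℝ) (a b : ι → ℝ) :
    |a ⬝ᵥ (M *ᵥ b)| ≤ opNorm M * euclNorm a * euclNorm b := by
  rw [abs_le]
  constructor
  · have h := bilin_le_opNorm (-M) a b
    rw [opNorm_neg, Matrix.neg_mulVec, dotProduct_neg] at h
    linarith
  · exact bilin_le_opNorm M a b

lemma g_diff_bound {ι : Type} [Fintype ι] [DecidableEq ι] (v : ℝ → ι → ℝ) (a b : ι → ℝ)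
    (t₁ t₂ : ℝ) :
    |(v t₁ ⬝ᵥ a) * (v t₁ ⬝ᵥ b) - (v t₂ ⬝ᵥ a) * (v t₂ ⬝ᵥ b)| ≤
      opNorm (Matrix.vecMulVec (v t₁) (v t₁) - Matrix.vecMulVec (v t₂) (v t₂))
        * euclNorm a * euclNorm b := by
  have h := bilin_abs_le (Matrix.vecMulVec (v t₁) (v t₁) - Matrix.vecMulVec (v t₂) (v t₂)) a b
  rwa [Matrix.sub_mulVec, dotProduct_sub, dot_vecMulVec, dot_vecMulVec] at h

lemma telescope {N : ℕ} (t : Fin (N + 1) → ℝ) :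
    ∑ i : Fin N, (t i.succ - t i.castSucc) = t (Fin.last N) - t 0 := by
  set f : ℕ → ℝ := fun k => if h : k ≤ N then t ⟨k, Nat.lt_succ_of_le h⟩ else t (Fin.last N)
    with hf
  have h1 : ∀ i : Fin N, t i.succ = f (i.val + 1) := by
    intro i
    simp only [hf]
    rw [dif_pos (by omega : i.val + 1 ≤ N)]
    rfl
  have h2 : ∀ i : Fin N, t i.castSucc = f i.val := by
    intro i
    simp only [hf]
    rw [dif_pos (by omega : i.val ≤ N)]
    rfl
  calc ∑ i : Fin N, (t i.succ - t i.castSucc) = ∑ i : Fin N, (f (i.val + 1) - f i.val) := by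
        apply Finset.sum_congr rfl; intro i _; rw [h1 i, h2 i]
    _ = ∑ k ∈ Finset.range N, (f (k + 1) - f k) :=
        Fin.sum_univ_eq_sum_range (fun k => f (k + 1) - f k) N
    _ = f N - f 0 := Finset.sum_range_sub f N
    _ = t (Fin.last N) - t 0 := by
        simp only [hf]
        rw [dif_pos le_rfl, dif_pos (Nat.zero_le N)]
        congr 1

lemma conjT_eq_transpose {ι κ : Type} (M : Matrix ι κ ℝ) : Mᴴ = Mᵀ := by
  ext i j
  simp [Matrix.conjTranspose_apply]

lemma matIntegral_quad {n : ℕ} {T : ℝ} (w : ℝ → Fin n → ℝ) (y : Fin n → ℝ)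
    (hint : ∀ i j : Fin n, IntegrableOn (fun t => w t i * w t j) (Set.Ioc (0:ℝ) T) volume) :
    y ⬝ᵥ ((matIntegral T (fun t => Matrix.vecMulVec (w t) (w t))) *ᵥ y)
      = ∫ t in Set.Ioc (0:ℝ) T, (w t ⬝ᵥ y)^2 := by
  have hstep : ∀ i : Fin n, (∑ j, (∫ t in Set.Ioc (0:ℝ) T, w t i * w t j) * y j)
      = ∫ t in Set.Ioc (0:ℝ) T, ∑ j, (w t i * w t j) * y j := by
    intro i
    rw [MeasureTheory.integral_finset_sum]
    · apply Finset.sum_congr rfl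
      intro j _
      rw [MeasureTheory.integral_mul_const]
    · intro j _
      exact (hint i j).mul_const _
  calc y ⬝ᵥ ((matIntegral T (fun t => Matrix.vecMulVec (w t) (w t))) *ᵥ y)
      = ∑ i, y i * ∑ j, (∫ t in Set.Ioc (0:ℝ) T, w t i * w t j) * y j := by
        simp only [dotProduct, Matrix.mulVec, matIntegral, Matrix.of_apply,
          Matrix.vecMulVec_apply]
    _ = ∑ i, ∫ t in Set.Ioc (0:ℝ) T, y i * ∑ j, (w t i * w t j) * y j := by
        apply Finset.sum_congr rfl
        intro i _
        rw [hstep i, ← MeasureTheory.integral_const_mul]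
    _ = ∫ t in Set.Ioc (0:ℝ) T, ∑ i, y i * ∑ j, (w t i * w t j) * y j := by
        rw [MeasureTheory.integral_finset_sum]
        intro i _
        apply Integrable.const_mul
        apply MeasureTheory.integrable_finset_sum
        intro j _
        exact (hint i j).mul_const _
    _ = ∫ t in Set.Ioc (0:ℝ) T, (w t ⬝ᵥ y)^2 := by
        apply MeasureTheory.integral_congr_ae
        filter_upwards with t
        rw [sq, dotProduct, Finset.sum_mul_sum]
        apply Finset.sum_congr rfl
        intro i _
        rw [Finset.mul_sum]
        apply Finset.sum_congr rfl
        intro j _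
        ring

theorem stmt16
    {n m : ℕ} (T : ℝ) (hT : 0 < T)
    (x xdot : ℝ → Fin n → ℝ) (u : ℝ → Fin m → ℝ)
    (Q : Matrix (Fin n) (Fin n) ℝ) (hQ : Q.PosSemidef)
    (hxdotL2 : MeasureTheory.MemLp xdot 2 (MeasureTheory.volume.restrict (Set.Icc (0:ℝ) T)))
    (huL2 : MeasureTheory.MemLp u 2 (MeasureTheory.volume.restrict (Set.Icc (0:ℝ) T)))
    (hAC : ∀ t ∈ Set.Icc (0:ℝ) T, ∀ i, x t i = x 0 i + ∫ s in (0:ℝ)..t, xdot s i)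
    (As : Matrix (Fin n) (Fin n) ℝ) (Bs : Matrix (Fin n) (Fin m) ℝ)
    (htrue : (As, Bs) ∈ SigmaCont T xdot x u Q)
    (hpe : (matIntegral T (fun t =>
      Matrix.vecMulVec (Sum.elim (x t) (u t)) (Sum.elim (x t) (u t)))).PosDef)
    (lam : ℝ) (hlam : 1 ≤ lam)
    (hbd : ∀ AB ∈ SigmaCont T xdot x u Q,
      loewnerLT (AB.1 * AB.1.transpose + AB.2 * AB.2.transpose)
        ((lam - 1) • (1 : Matrix (Fin n) (Fin n) ℝ)))
    (δ : ℝ) (hδ : 0 < δ) (N : ℕ) (hN : 0 < N) (hTN : T = N * δ)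
    (L : ℝ) (hL : 0 ≤ L)
    (K : Matrix (Fin m) (Fin n) ℝ) (P : Matrix (Fin n) (Fin n) ℝ) (β : ℝ)
    (hP : P.PosDef) (hβ : δ * T * L / 2 < β)
    (hlmi : SampLMI δ N xdot x u Q P K β)
    (hxi : SqLipschitz T (L / lam) (xiSig xdot x u) ∨
      TotalSqVarLE T (xiSig xdot x u) (L / lam * T / 2)) :
    ∃ (K' : Matrix (Fin m) (Fin n) ℝ) (P' : Matrix (Fin n) (Fin n) ℝ),
      P'.PosDef ∧ ∀ AB ∈ SigmaCont T xdot x u Q, negDefQ ((AB.1 + AB.2 * K') * P' + P' * (AB.1 + AB.2 * K').transpose) := by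
  classical
  refine ⟨K, P, hP, ?_⟩
  rintro ⟨A, B⟩ hAB
  set w : ℝ → Fin n → ℝ := noiseSig xdot x u A B with hw
  set ξ : ℝ → (Fin n ⊕ (Fin n ⊕ Fin m)) → ℝ := xiSig xdot x u with hξ
  have hlam0 : (0:ℝ) < lam := lt_of_lt_of_le one_pos hlam
  have hc0 : (0:ℝ) ≤ L / lam := div_nonneg hL hlam0.le
  -- partition bound machinery
  have hPBgen : ∀ (a b : (Fin n ⊕ (Fin n ⊕ Fin m)) → ℝ) (c : ℝ),
      (∀ (N' : ℕ) (t : Fin (N' + 1) → ℝ), Monotone t → t 0 = 0 → t (Fin.last N') = T →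
        (∑ i : Fin N', opNorm (Matrix.vecMulVec (ξ (t i.succ)) (ξ (t i.succ)) -
          Matrix.vecMulVec (ξ (t i.castSucc)) (ξ (t i.castSucc)))) ≤ c) →
      PartBound T (fun t => (ξ t ⬝ᵥ a) * (ξ t ⬝ᵥ b)) (c * (euclNorm a * euclNorm b)) := by
    intro a b c hc N' t ht h0 hlast
    have hstep1 : (∑ i : Fin N', |(ξ (t i.succ) ⬝ᵥ a) * (ξ (t i.succ) ⬝ᵥ b)
          - (ξ (t i.castSucc) ⬝ᵥ a) * (ξ (t i.castSucc) ⬝ᵥ b)|) ≤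
        (∑ i : Fin N', opNorm (Matrix.vecMulVec (ξ (t i.succ)) (ξ (t i.succ)) -
          Matrix.vecMulVec (ξ (t i.castSucc)) (ξ (t i.castSucc)))) *
            (euclNorm a * euclNorm b) := by
      rw [Finset.sum_mul]
      apply Finset.sum_le_sum
      intro i _
      refine le_trans (g_diff_bound ξ a b _ _) (le_of_eq ?_)
      ring
    refine le_trans hstep1 ?_
    exact mul_le_mul_of_nonneg_right (hc N' t ht h0 hlast)
      (mul_nonneg (euclNorm_nonneg _) (euclNorm_nonneg _))
  have hcT : L / lam * T / 2 ≤ L / lam * T := by nlinarith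
  have hopLip : SqLipschitz T (L / lam) ξ →
      ∀ (N' : ℕ) (t : Fin (N' + 1) → ℝ), Monotone t → t 0 = 0 → t (Fin.last N') = T →
      (∑ i : Fin N', opNorm (Matrix.vecMulVec (ξ (t i.succ)) (ξ (t i.succ)) -
        Matrix.vecMulVec (ξ (t i.castSucc)) (ξ (t i.castSucc)))) ≤ L / lam * T := by
    intro hlip N' t ht h0 hlast
    have hmem : ∀ j : Fin (N' + 1), t j ∈ Set.Icc (0:ℝ) T := by
      intro j
      exact ⟨h0 ▸ ht (Fin.zero_le j), hlast ▸ ht (Fin.le_last j)⟩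
    calc (∑ i : Fin N', opNorm (Matrix.vecMulVec (ξ (t i.succ)) (ξ (t i.succ)) -
            Matrix.vecMulVec (ξ (t i.castSucc)) (ξ (t i.castSucc))))
        ≤ ∑ i : Fin N', L / lam * (t i.succ - t i.castSucc) := by
          apply Finset.sum_le_sum
          intro i _
          have h1 := hlip _ (hmem i.succ) _ (hmem i.castSucc)
          have h2 : |t i.succ - t i.castSucc| = t i.succ - t i.castSucc := by
            rw [abs_of_nonneg]
            have := ht (Fin.castSucc_le_succ i)
            linarith
          rw [h2] at h1
          exact h1
      _ = L / lam * T := by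
          rw [← Finset.mul_sum, telescope, h0, hlast, sub_zero]
  have hopTV : TotalSqVarLE T ξ (L / lam * T / 2) →
      ∀ (N' : ℕ) (t : Fin (N' + 1) → ℝ), Monotone t → t 0 = 0 → t (Fin.last N') = T →
      (∑ i : Fin N', opNorm (Matrix.vecMulVec (ξ (t i.succ)) (ξ (t i.succ)) -
        Matrix.vecMulVec (ξ (t i.castSucc)) (ξ (t i.castSucc)))) ≤ L / lam * T / 2 :=
    fun htv N' t ht h0 hlast => htv _ ⟨N', t, ht, h0, hlast, rfl⟩
  have hop : ∀ (N' : ℕ) (t : Fin (N' + 1) → ℝ), Monotone t → t 0 = 0 → t (Fin.last N') = T →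
      (∑ i : Fin N', opNorm (Matrix.vecMulVec (ξ (t i.succ)) (ξ (t i.succ)) -
        Matrix.vecMulVec (ξ (t i.castSucc)) (ξ (t i.castSucc)))) ≤ L / lam * T := by
    rcases hxi with hlip | htv
    · exact hopLip hlip
    · exact fun N' t ht h0 hlast => le_trans (hopTV htv N' t ht h0 hlast) hcT
  have hInt : ∀ a b : (Fin n ⊕ (Fin n ⊕ Fin m)) → ℝ,
      IntegrableOn (fun t => (ξ t ⬝ᵥ a) * (ξ t ⬝ᵥ b)) (Set.Ioc (0:ℝ) T) volume := by
    intro a b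
    exact (hPBgen a b (L / lam * T) hop).integrableOn hT
  have main : ∀ y : Fin n → ℝ, y ≠ 0 →
      y ⬝ᵥ ((((A + B * K) * P) + P * (A + B * K)ᵀ) *ᵥ y) < 0 := by
    intro y hy
    set z : (Fin n ⊕ (Fin n ⊕ Fin m)) → ℝ :=
      Sum.elim y (Sum.elim (Aᵀ *ᵥ y) (Bᵀ *ᵥ y)) with hz
    have hkey : ∀ t, ξ t ⬝ᵥ z = w t ⬝ᵥ y := fun t => key_dot xdot x u A B y t
    -- integrability of entries of w wᵀ
    have hIntw : ∀ i j : Fin n, IntegrableOn (fun t => w t i * w t j)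
        (Set.Ioc (0:ℝ) T) volume := by
      intro i j
      have hfe : (fun t => w t i * w t j) = fun t =>
          (ξ t ⬝ᵥ (Sum.elim (Pi.single i 1) (Sum.elim (Aᵀ *ᵥ Pi.single i 1) (Bᵀ *ᵥ Pi.single i 1))))
          * (ξ t ⬝ᵥ (Sum.elim (Pi.single j 1) (Sum.elim (Aᵀ *ᵥ Pi.single j 1) (Bᵀ *ᵥ Pi.single j 1)))) := by
        funext t
        rw [key_dot xdot x u A B (Pi.single i 1) t, key_dot xdot x u A B (Pi.single j 1) t]
        rw [dotProduct_single_one, dotProduct_single_one]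
      rw [hfe]
      exact hInt _ _
    have hs_int : IntegrableOn (fun t => (ξ t ⬝ᵥ z) ^ 2) (Set.Ioc (0:ℝ) T) volume := by
      have := hInt z z
      simpa [sq] using this
    -- integral form bound via membership in SigmaCont
    have hintegral : y ⬝ᵥ ((matIntegral T (fun t => Matrix.vecMulVec (w t) (w t))) *ᵥ y)
        = ∫ t in Set.Ioc (0:ℝ) T, (ξ t ⬝ᵥ z) ^ 2 := by
      rw [matIntegral_quad w y hIntw]
      apply MeasureTheory.integral_congr_ae
      filter_upwards with t
      rw [hkey t]
    have hQbound : (∫ t in Set.Ioc (0:ℝ) T, (ξ t ⬝ᵥ z) ^ 2) ≤ y ⬝ᵥ (Q *ᵥ y) := by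
      have h := psd_quad hAB y
      rw [Matrix.sub_mulVec, dotProduct_sub] at h
      rw [← hintegral]
      linarith
    -- sampling bound
    have hZ : euclNorm z * euclNorm z
        = y ⬝ᵥ y + ((Aᵀ *ᵥ y) ⬝ᵥ (Aᵀ *ᵥ y) + (Bᵀ *ᵥ y) ⬝ᵥ (Bᵀ *ᵥ y)) := by
      rw [euclNorm_mul_self]
      simp [hz, Fintype.sum_sum_type, dotProduct, sq]
    have hsamp : δ * (∑ k ∈ Finset.range N, (ξ ((k:ℝ) * δ) ⬝ᵥ z) ^ 2)
        ≤ (∫ t in Set.Ioc (0:ℝ) T, (ξ t ⬝ᵥ z) ^ 2)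
          + δ * (L / lam * T / 2 * (euclNorm z * euclNorm z)) := by
      rcases hxi with hlip | htv
      · have hg : ∀ t₁ ∈ Set.Icc (0:ℝ) T, ∀ t₂ ∈ Set.Icc (0:ℝ) T,
            |(ξ t₁ ⬝ᵥ z) ^ 2 - (ξ t₂ ⬝ᵥ z) ^ 2|
              ≤ (L / lam * (euclNorm z * euclNorm z)) * |t₁ - t₂| := by
          intro t₁ h₁ t₂ h₂
          have h3 := g_diff_bound ξ z z t₁ t₂
          have h4 := hlip _ h₁ _ h₂
          rw [← sq, ← sq] at h3
          refine le_trans h3 ?_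
          have hab : (0:ℝ) ≤ euclNorm z * euclNorm z :=
            mul_nonneg (euclNorm_nonneg _) (euclNorm_nonneg _)
          calc opNorm _ * euclNorm z * euclNorm z
              ≤ (L / lam * |t₁ - t₂|) * euclNorm z * euclNorm z := by
                apply mul_le_mul_of_nonneg_right
                  (mul_le_mul_of_nonneg_right h4 (euclNorm_nonneg _)) (euclNorm_nonneg _)
            _ = (L / lam * (euclNorm z * euclNorm z)) * |t₁ - t₂| := by ring
        have h5 := samp_lip hδ (mul_nonneg hc0
          (mul_nonneg (euclNorm_nonneg _) (euclNorm_nonneg _))) hTN hs_int hg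
        refine le_trans h5 (le_of_eq ?_)
        rw [hTN]
        ring
      · have hpb : PartBound T (fun t => (ξ t ⬝ᵥ z) * (ξ t ⬝ᵥ z))
            (L / lam * T / 2 * (euclNorm z * euclNorm z)) :=
          hPBgen z z (L / lam * T / 2) (hopTV htv)
        have h5 := samp_tv hδ hN hTN (hInt z z) hpb
        have he1 : (∑ k ∈ Finset.range N, (ξ ((k:ℝ) * δ) ⬝ᵥ z) * (ξ ((k:ℝ) * δ) ⬝ᵥ z))
            = ∑ k ∈ Finset.range N, (ξ ((k:ℝ) * δ) ⬝ᵥ z) ^ 2 := by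
          apply Finset.sum_congr rfl
          intro k _
          rw [sq]
        have he2 : (∫ t in Set.Ioc (0:ℝ) T, (ξ t ⬝ᵥ z) * (ξ t ⬝ᵥ z))
            = ∫ t in Set.Ioc (0:ℝ) T, (ξ t ⬝ᵥ z) ^ 2 := by
          apply MeasureTheory.integral_congr_ae
          filter_upwards with t
          rw [sq]
        rw [he1, he2] at h5
        exact h5
    -- LMI quadratic inequality
    have hlmiq := psd_quad hlmi z
    rw [Matrix.sub_mulVec, dotProduct_sub, sampled_quad, lmi_quad] at hlmiq
    -- bound on z via hbd
    have hbdq := (hbd (A, B) hAB).dotProduct_mulVec_pos hy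
    have hbdq' : (Aᵀ *ᵥ y) ⬝ᵥ (Aᵀ *ᵥ y) + (Bᵀ *ᵥ y) ⬝ᵥ (Bᵀ *ᵥ y)
        ≤ (lam - 1) * (y ⬝ᵥ y) := by
      have h1 : star y = y := by
        funext i; simp
      rw [h1, Matrix.sub_mulVec, dotProduct_sub, Matrix.add_mulVec,
        dotProduct_add, Matrix.smul_mulVec, Matrix.one_mulVec,
        dotProduct_smul] at hbdq
      have h2 : y ⬝ᵥ ((A * Aᵀ) *ᵥ y) = (Aᵀ *ᵥ y) ⬝ᵥ (Aᵀ *ᵥ y) := by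
        rw [← Matrix.mulVec_mulVec, dotProduct_comm, dot_trans]
      have h3 : y ⬝ᵥ ((B * Bᵀ) *ᵥ y) = (Bᵀ *ᵥ y) ⬝ᵥ (Bᵀ *ᵥ y) := by
        rw [← Matrix.mulVec_mulVec, dotProduct_comm, dot_trans]
      rw [h2, h3, smul_eq_mul] at hbdq
      linarith
    have hyy : 0 < y ⬝ᵥ y := by
      have h0 : 0 ≤ y ⬝ᵥ y := Finset.sum_nonneg (fun i _ => mul_self_nonneg (y i))
      rcases h0.lt_or_eq with h | h
      · exact h
      · exact absurd (dotProduct_self_eq_zero.mp h.symm) hy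
    -- combine
    have hZle : euclNorm z * euclNorm z ≤ lam * (y ⬝ᵥ y) := by
      rw [hZ]
      nlinarith
    have hLlam : L / lam * lam = L := div_mul_cancel₀ L (ne_of_gt hlam0)
    have hfinal : L / lam * T / 2 * (euclNorm z * euclNorm z) ≤ T * L / 2 * (y ⬝ᵥ y) := by
      calc L / lam * T / 2 * (euclNorm z * euclNorm z)
          ≤ L / lam * T / 2 * (lam * (y ⬝ᵥ y)) := by
            apply mul_le_mul_of_nonneg_left hZle
            positivity
        _ = T * L / 2 * (y ⬝ᵥ y) := by
            field_simp
    rw [Matrix.add_mulVec, dotProduct_add]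
    nlinarith [mul_le_mul_of_nonneg_left hfinal hδ.le, hsamp, hQbound, hlmiq, hβ, hyy,
      mul_pos hyy (sub_pos.mpr hβ)]
  -- final assembly
  show (-(((A, B).1 + (A, B).2 * K) * P + P * ((A, B).1 + (A, B).2 * K)ᵀ)).PosDef
  refine Matrix.PosDef.of_dotProduct_mulVec_pos ?_ ?_
  · rw [Matrix.IsHermitian, conjT_eq_transpose]
    have hPs : Pᵀ = P := by
      rw [← conjT_eq_transpose]; exact hP.1
    rw [Matrix.transpose_neg, Matrix.transpose_add, Matrix.transpose_mul, Matrix.transpose_mul,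
      Matrix.transpose_transpose, hPs, add_comm]
  · intro v hv
    have := main v hv
    have h1 : star v = v := by funext i; simp
    rw [h1, Matrix.neg_mulVec, dotProduct_neg]
    simpa using neg_pos.mpr this
end

section
/- Let T > 0, L ≥ 0, let w : [0,T] → ℝ^n be L-square Lipschitz, and let δ, γ > 0 be such that γ = (ℓ+1)δ for some integer ℓ ≥ 0 and both T/δ and T/γ are positive integers. Then ‖δ · Σ_{k=0}^{T/δ−1} w(kδ)w(kδ)^T − γ · Σ_{k=0}^{T/γ−1} w(kγ)w(kγ)^T‖ ≤ (1/2)(γ−δ)TL = (1/2)ℓδTL, where ‖·‖ is the operator norm induced by the Euclidean norm. -/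
open MeasureTheory Matrix

section auxx

private lemma my_sum_range_mul {M : Type*} [AddCommMonoid M] (f : ℕ → M) (a b : ℕ) :
    ∑ k ∈ Finset.range (a*b), f k = ∑ j ∈ Finset.range a, ∑ r ∈ Finset.range b, f (j*b+r) := by
  induction a with
  | zero => simp
  | succ a ih =>
    have h2 : ∑ x ∈ Finset.Ico (a*b) (a*b+b), f x = ∑ r ∈ Finset.range b, f (a*b + r) := by
      rw [Finset.sum_Ico_eq_sum_range, Nat.add_sub_cancel_left]
    have hadd : ∑ k ∈ Finset.range (a*b + b), f k
        = ∑ k ∈ Finset.range (a*b), f k + ∑ r ∈ Finset.range b, f (a*b + r) := by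
      rw [Finset.range_eq_Ico, ← Finset.sum_Ico_consecutive _ (Nat.zero_le _) (Nat.le_add_right _ _),
        ← Finset.range_eq_Ico, h2]
    rw [Nat.succ_mul, hadd, ih, Finset.sum_range_succ]

private lemma my_opNorm_smul {nn : ℕ} (a : ℝ) (A : Matrix (Fin nn) (Fin nn) ℝ) :
    opNorm (a • A) = |a| * opNorm A := by
  rw [opNorm, opNorm, _root_.map_smul, _root_.map_smul]
  exact (norm_smul a (LinearMap.toContinuousLinearMap (Matrix.toEuclideanLin A))).trans
    (by rw [Real.norm_eq_abs])

private lemma my_opNorm_sum_le {nn : ℕ} {α : Type*} (s : Finset α)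
    (f : α → Matrix (Fin nn) (Fin nn) ℝ) :
    opNorm (∑ i ∈ s, f i) ≤ ∑ i ∈ s, opNorm (f i) := by
  simp only [opNorm, map_sum]
  exact norm_sum_le _ _

private lemma my_gauss (ℓ : ℕ) : ∑ r ∈ Finset.range (ℓ+1), (r:ℝ) = ℓ*(ℓ+1)/2 := by
  have h := Finset.sum_range_id_mul_two (ℓ+1)
  rw [Nat.add_sub_cancel] at h
  have h' := congrArg (fun x : ℕ => (x:ℝ)) h
  push_cast at h'
  linarith

end auxx

theorem stmt17 {n : ℕ} (T L δ γ : ℝ) (hT : 0 < T) (hL : 0 ≤ L) (hδ : 0 < δ)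
    (ℓ : ℕ) (hγ : γ = (ℓ + 1) * δ)
    (Nδ Nγ : ℕ) (hNδ : 0 < Nδ) (hNγ : 0 < Nγ) (hTδ : T = Nδ * δ) (hTγ : T = Nγ * γ)
    (w : ℝ → Fin n → ℝ) (hw : SqLipschitz T L w) :
    opNorm (sampledGram δ Nδ w - sampledGram γ Nγ w) ≤ (γ - δ) * T * L / 2 ∧
      (γ - δ) * T * L / 2 = ℓ * δ * T * L / 2 := by
  refine ⟨?_, by rw [hγ]; push_cast; ring⟩
  set W : ℝ → Matrix (Fin n) (Fin n) ℝ := fun t => Matrix.vecMulVec (w t) (w t) with hWdef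
  have hN : Nδ = Nγ * (ℓ + 1) := by
    have h1 : (Nδ:ℝ) * δ = ((Nγ * (ℓ+1) : ℕ):ℝ) * δ := by push_cast; rw [← hTδ, hTγ, hγ]; ring
    exact_mod_cast mul_right_cancel₀ (ne_of_gt hδ) h1
  set D : Matrix (Fin n) (Fin n) ℝ := ∑ j ∈ Finset.range Nγ, ∑ r ∈ Finset.range (ℓ+1),
    (W ((j*(ℓ+1)+r : ℕ) * δ) - W ((j*(ℓ+1) : ℕ) * δ)) with hD
  have hsplit : sampledGram δ Nδ w - sampledGram γ Nγ w = δ • D := by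
    have hinner : ∀ j ∈ Finset.range Nγ,
        ∑ r ∈ Finset.range (ℓ+1), W ((j*(ℓ+1) : ℕ) * δ) = (ℓ+1) • W ((j*(ℓ+1) : ℕ) * δ) := by
      intro j _
      rw [Finset.sum_const, Finset.card_range]
    have hγterm : ∀ j ∈ Finset.range Nγ,
        δ • ((ℓ+1) • W ((j*(ℓ+1) : ℕ) * δ)) = γ • W ((j:ℕ) * γ) := by
      intro j _
      have harg : ((j*(ℓ+1) : ℕ) : ℝ) * δ = (j:ℕ) * γ := by rw [hγ]; push_cast; ring
      rw [harg, ← Nat.cast_smul_eq_nsmul ℝ, smul_smul, hγ]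
      push_cast
      ring_nf
    rw [hD]
    simp only [Finset.sum_sub_distrib]
    rw [smul_sub]
    congr 1
    · refine Eq.symm ?_
      show δ • ∑ j ∈ Finset.range Nγ, ∑ r ∈ Finset.range (ℓ+1), W (((j*(ℓ+1)+r : ℕ)) * δ)
        = sampledGram δ Nδ w
      rw [sampledGram, hN, my_sum_range_mul (fun k => W ((k:ℕ) * δ)) Nγ (ℓ+1)]
    · refine Eq.symm ?_
      show δ • ∑ j ∈ Finset.range Nγ, ∑ r ∈ Finset.range (ℓ+1), W (((j*(ℓ+1) : ℕ)) * δ)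
        = sampledGram γ Nγ w
      rw [Finset.sum_congr rfl hinner, Finset.smul_sum, Finset.sum_congr rfl hγterm,
        ← Finset.smul_sum, sampledGram]
  have hterm : ∀ j ∈ Finset.range Nγ, ∀ r ∈ Finset.range (ℓ+1),
      opNorm (W ((j*(ℓ+1)+r : ℕ) * δ) - W ((j*(ℓ+1) : ℕ) * δ)) ≤ L * ((r:ℕ) * δ) := by
    intro j hj r hr
    rw [Finset.mem_range] at hj hr
    have hkle : j*(ℓ+1)+r ≤ Nδ := by
      rw [hN]
      refine le_of_lt ?_
      calc j*(ℓ+1)+r < (j+1)*(ℓ+1) := by nlinarith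
        _ ≤ Nγ * (ℓ+1) := Nat.mul_le_mul_right _ hj
    have ht₁ : ((j*(ℓ+1)+r : ℕ) : ℝ) * δ ∈ Set.Icc (0:ℝ) T := by
      constructor
      · positivity
      · rw [hTδ]
        exact mul_le_mul_of_nonneg_right (by exact_mod_cast hkle) hδ.le
    have ht₂ : ((j*(ℓ+1) : ℕ) : ℝ) * δ ∈ Set.Icc (0:ℝ) T := by
      constructor
      · positivity
      · rw [hTδ]
        refine mul_le_mul_of_nonneg_right ?_ hδ.le
        exact_mod_cast le_trans (Nat.le_add_right _ r) hkle
    have := hw _ ht₁ _ ht₂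
    have habs : |((j*(ℓ+1)+r : ℕ) : ℝ) * δ - ((j*(ℓ+1) : ℕ) : ℝ) * δ| = (r:ℕ) * δ := by
      rw [abs_of_nonneg (by push_cast; nlinarith)]
      push_cast
      ring
    rw [habs] at this
    exact this
  have hDbound : opNorm D ≤ (Nγ:ℝ) * (L * δ * ((ℓ:ℝ)*(ℓ+1)/2)) := by
    calc opNorm D ≤ ∑ j ∈ Finset.range Nγ, opNorm (∑ r ∈ Finset.range (ℓ+1),
          (W ((j*(ℓ+1)+r : ℕ) * δ) - W ((j*(ℓ+1) : ℕ) * δ))) := my_opNorm_sum_le _ _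
      _ ≤ ∑ j ∈ Finset.range Nγ, ∑ r ∈ Finset.range (ℓ+1),
            opNorm (W ((j*(ℓ+1)+r : ℕ) * δ) - W ((j*(ℓ+1) : ℕ) * δ)) :=
          Finset.sum_le_sum fun j _ => my_opNorm_sum_le _ _
      _ ≤ ∑ j ∈ Finset.range Nγ, ∑ r ∈ Finset.range (ℓ+1), L * ((r:ℕ) * δ) :=
          Finset.sum_le_sum fun j hj => Finset.sum_le_sum fun r hr => hterm j hj r hr
      _ = (Nγ:ℝ) * (L * δ * ((ℓ:ℝ)*(ℓ+1)/2)) := by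
          have hin : ∑ r ∈ Finset.range (ℓ+1), L * ((r:ℕ) * δ) = L * δ * ((ℓ:ℝ)*(ℓ+1)/2) := by
            rw [← my_gauss ℓ, Finset.mul_sum]
            apply Finset.sum_congr rfl
            intro r _
            ring
          rw [Finset.sum_congr rfl (fun j _ => hin), Finset.sum_const, Finset.card_range,
            nsmul_eq_mul]
  calc opNorm (sampledGram δ Nδ w - sampledGram γ Nγ w) = |δ| * opNorm D := by
        rw [hsplit, my_opNorm_smul]
    _ = δ * opNorm D := by rw [abs_of_pos hδ]
    _ ≤ δ * ((Nγ:ℝ) * (L * δ * ((ℓ:ℝ)*(ℓ+1)/2))) := mul_le_mul_of_nonneg_left hDbound hδ.le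
    _ = (γ - δ) * T * L / 2 := by rw [hTγ, hγ]; push_cast; ring
end

section
/- Let T > 0, L ≥ 0, let Q ∈ ℝ^{n×n} be positive semidefinite, let w : [0,T] → ℝ^n be L-square Lipschitz, and let δ, γ > 0 be such that γ = (ℓ+1)δ for some integer ℓ ≥ 0 and both T/δ and T/γ are positive integers. Then: (a) if δ · Σ_{k=0}^{T/δ−1} w(kδ)w(kδ)^T ≤ Q in the Loewner order, then γ · Σ_{k=0}^{T/γ−1} w(kγ)w(kγ)^T ≤ Q + (1/2)(γ−δ)TL·I_n; and (b) if γ · Σ_{k=0}^{T/γ−1} w(kγ)w(kγ)^T ≤ Q, then δ · Σ_{k=0}^{T/δ−1} w(kδ)w(kδ)^T ≤ Q + (1/2)(γ−δ)TL·I_n. -/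
open MeasureTheory Matrix

noncomputable def gmap (n : ℕ) : Matrix (Fin n) (Fin n) ℝ →ₗ[ℝ]
    (EuclideanSpace ℝ (Fin n) →L[ℝ] EuclideanSpace ℝ (Fin n)) :=
  (LinearMap.toContinuousLinearMap : _ ≃ₗ[ℝ] _).toLinearMap.comp
    (Matrix.toEuclideanLin : Matrix (Fin n) (Fin n) ℝ ≃ₗ[ℝ] _).toLinearMap

lemma opNorm_eq_gmap {n : ℕ} (M : Matrix (Fin n) (Fin n) ℝ) : opNorm M = ‖gmap n M‖ := rfl

lemma opNorm_smul {n : ℕ} (c : ℝ) (M : Matrix (Fin n) (Fin n) ℝ) :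
    opNorm (c • M) = |c| * opNorm M := by
  rw [opNorm_eq_gmap, opNorm_eq_gmap, LinearMap.map_smul, norm_smul, Real.norm_eq_abs]

lemma opNorm_neg_s18 {n : ℕ} (M : Matrix (Fin n) (Fin n) ℝ) : opNorm (-M) = opNorm M := by
  rw [opNorm_eq_gmap, opNorm_eq_gmap, LinearMap.map_neg, norm_neg]

lemma opNorm_sum_le {n : ℕ} {α : Type} (s : Finset α) (f : α → Matrix (Fin n) (Fin n) ℝ) :
    opNorm (∑ a ∈ s, f a) ≤ ∑ a ∈ s, opNorm (f a) := by
  rw [opNorm_eq_gmap, map_sum]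
  refine (norm_sum_le _ _).trans (le_of_eq ?_)
  exact Finset.sum_congr rfl fun a _ => (opNorm_eq_gmap (f a)).symm

lemma quad_le {n : ℕ} (M : Matrix (Fin n) (Fin n) ℝ) (x : Fin n → ℝ) :
    x ⬝ᵥ M.mulVec x ≤ opNorm M * (x ⬝ᵥ x) := by
  let y : EuclideanSpace ℝ (Fin n) := (WithLp.equiv 2 _).symm x
  have h1 : x ⬝ᵥ M.mulVec x = inner ℝ y ((LinearMap.toContinuousLinearMap (Matrix.toEuclideanLin M)) y) := by
    simp [Matrix.toEuclideanLin_apply, y, inner, dotProduct, mul_comm]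
  have h2 : inner ℝ y ((LinearMap.toContinuousLinearMap (Matrix.toEuclideanLin M)) y) ≤ ‖y‖ * (opNorm M * ‖y‖) :=
    (real_inner_le_norm _ _).trans
      (mul_le_mul_of_nonneg_left (ContinuousLinearMap.le_opNorm _ _) (norm_nonneg _))
  have h3 : ‖y‖ * ‖y‖ = x ⬝ᵥ x := by
    rw [← real_inner_self_eq_norm_mul_norm]; simp [y, inner, dotProduct]
  calc x ⬝ᵥ M.mulVec x ≤ ‖y‖ * (opNorm M * ‖y‖) := h1 ▸ h2
    _ = opNorm M * (x ⬝ᵥ x) := by rw [← h3]; ring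

lemma le_smul_one {n : ℕ} {M : Matrix (Fin n) (Fin n) ℝ} {c : ℝ}
    (hM : M.IsHermitian) (hc : opNorm M ≤ c) :
    (c • (1 : Matrix (Fin n) (Fin n) ℝ) - M).PosSemidef := by
  refine Matrix.PosSemidef.of_dotProduct_mulVec_nonneg ?_ ?_
  · have : (c • (1 : Matrix (Fin n) (Fin n) ℝ) - M)ᴴ = c • (1:Matrix (Fin n) (Fin n) ℝ) - M := by
      simp only [Matrix.conjTranspose_sub, Matrix.conjTranspose_smul, hM.eq, star_trivial,
        Matrix.conjTranspose_one]
    exact this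
  · intro x
    have h1 : x ⬝ᵥ M.mulVec x ≤ c * (x ⬝ᵥ x) := by
      refine (quad_le M x).trans (mul_le_mul_of_nonneg_right hc ?_)
      simpa [dotProduct] using Finset.sum_nonneg fun i _ => mul_self_nonneg (x i)
    have : (x : Fin n → ℝ) ⬝ᵥ (c • (1 : Matrix (Fin n) (Fin n) ℝ) - M).mulVec x
        = c * (x ⬝ᵥ x) - x ⬝ᵥ M.mulVec x := by
      simp [Matrix.sub_mulVec, Matrix.smul_mulVec, dotProduct_sub, dotProduct_smul,
        smul_eq_mul]
    simp only [star_trivial]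
    rw [this]
    linarith

lemma sum_range_mul_eq {β : Type} [AddCommMonoid β] (f : ℕ → β) (a b : ℕ) :
    ∑ k ∈ Finset.range (a * b), f k
      = ∑ j ∈ Finset.range a, ∑ r ∈ Finset.range b, f (j * b + r) := by
  induction a with
  | zero => simp
  | succ a ih =>
    rw [Nat.succ_mul, Finset.sum_range_add, ih, Finset.sum_range_succ]


lemma vecMulVec_herm {n : ℕ} (a : Fin n → ℝ) : (Matrix.vecMulVec a a).IsHermitian := by
  ext i j
  simp [Matrix.vecMulVec_apply, Matrix.conjTranspose_apply, mul_comm]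

lemma sampledGram_herm {n : ℕ} (δ : ℝ) (N : ℕ) (w : ℝ → Fin n → ℝ) :
    (sampledGram δ N w).IsHermitian := by
  unfold Matrix.IsHermitian sampledGram
  rw [Matrix.conjTranspose_smul, Matrix.conjTranspose_sum]
  simp only [star_trivial]
  congr 1
  exact Finset.sum_congr rfl fun k _ => vecMulVec_herm _

theorem stmt18 {n : ℕ} (T L δ γ : ℝ) (hT : 0 < T) (hL : 0 ≤ L) (hδ : 0 < δ)
    (ℓ : ℕ) (hγ : γ = (ℓ + 1) * δ)
    (Nδ Nγ : ℕ) (hNδ : 0 < Nδ) (hNγ : 0 < Nγ) (hTδ : T = Nδ * δ) (hTγ : T = Nγ * γ)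
    (Q : Matrix (Fin n) (Fin n) ℝ) (hQ : Q.PosSemidef)
    (w : ℝ → Fin n → ℝ) (hw : SqLipschitz T L w) :
    (loewnerLE (sampledGram δ Nδ w) Q →
      loewnerLE (sampledGram γ Nγ w)
        (Q + ((γ - δ) * T * L / 2) • (1 : Matrix (Fin n) (Fin n) ℝ))) ∧
    (loewnerLE (sampledGram γ Nγ w) Q →
      loewnerLE (sampledGram δ Nδ w)
        (Q + ((γ - δ) * T * L / 2) • (1 : Matrix (Fin n) (Fin n) ℝ))) := by
  have hγpos : 0 < γ := by rw [hγ]; positivity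
  set c : ℝ := (γ - δ) * T * L / 2 with hc
  set G : ℝ → Matrix (Fin n) (Fin n) ℝ := fun t => Matrix.vecMulVec (w t) (w t) with hG
  -- Nδ = Nγ * (ℓ + 1)
  have hNcast : (Nδ : ℝ) = (Nγ : ℝ) * (ℓ + 1) := by
    have h1 : (Nδ : ℝ) * δ = ((Nγ : ℝ) * (ℓ + 1)) * δ := by
      rw [← hTδ, hTγ, hγ]; ring
    exact mul_right_cancel₀ (ne_of_gt hδ) h1
  have hN : Nδ = Nγ * (ℓ + 1) := by
    have : (Nδ : ℝ) = ((Nγ * (ℓ + 1) : ℕ) : ℝ) := by push_cast; exact hNcast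
    exact_mod_cast this
  -- rewrite both Grams as double sums
  have hsgδ : sampledGram δ Nδ w
      = δ • ∑ j ∈ Finset.range Nγ, ∑ r ∈ Finset.range (ℓ + 1), G ((j:ℝ) * γ + (r:ℝ) * δ) := by
    unfold sampledGram
    rw [hN, sum_range_mul_eq]
    congr 1
    refine Finset.sum_congr rfl fun j _ => Finset.sum_congr rfl fun r _ => ?_
    have : ((j * (ℓ + 1) + r : ℕ) : ℝ) * δ = (j:ℝ) * γ + (r:ℝ) * δ := by
      push_cast; rw [hγ]; ring
    rw [this]
  have hsgγ : sampledGram γ Nγ w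
      = δ • ∑ j ∈ Finset.range Nγ, ∑ r ∈ Finset.range (ℓ + 1), G ((j:ℝ) * γ) := by
    unfold sampledGram
    rw [Finset.smul_sum, Finset.smul_sum]
    refine Finset.sum_congr rfl fun j _ => ?_
    rw [Finset.sum_const, Finset.card_range, ← Nat.cast_smul_eq_nsmul ℝ, smul_smul]
    have : δ * ((ℓ + 1 : ℕ) : ℝ) = γ := by rw [hγ]; push_cast; ring
    rw [this]
  set D : Matrix (Fin n) (Fin n) ℝ := sampledGram γ Nγ w - sampledGram δ Nδ w with hDdef
  have hD : D = δ • ∑ j ∈ Finset.range Nγ, ∑ r ∈ Finset.range (ℓ + 1),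
      (G ((j:ℝ) * γ) - G ((j:ℝ) * γ + (r:ℝ) * δ)) := by
    rw [hDdef, hsgγ, hsgδ, ← smul_sub, ← Finset.sum_sub_distrib]
    congr 1
    exact Finset.sum_congr rfl fun j _ => (Finset.sum_sub_distrib _ _).symm
  -- Hermitian
  have hDh : D.IsHermitian := (sampledGram_herm γ Nγ w).sub (sampledGram_herm δ Nδ w)
  -- norm bound for each term
  have hterm : ∀ j ∈ Finset.range Nγ, ∀ r ∈ Finset.range (ℓ + 1),
      opNorm (G ((j:ℝ) * γ) - G ((j:ℝ) * γ + (r:ℝ) * δ)) ≤ L * ((r:ℝ) * δ) := by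
    intro j hj r hr
    have hjN : (j:ℝ) ≤ (Nγ : ℝ) - 1 := by
      have := Finset.mem_range.mp hj
      have : (j:ℝ) + 1 ≤ (Nγ : ℝ) := by exact_mod_cast Nat.succ_le_of_lt this
      linarith
    have hrℓ : (r:ℝ) ≤ (ℓ : ℝ) := by
      have := Finset.mem_range.mp hr
      have : (r:ℝ) + 1 ≤ (ℓ : ℝ) + 1 := by exact_mod_cast Nat.succ_le_of_lt this
      linarith
    have hle2 : (j:ℝ) * γ + (r:ℝ) * δ ≤ T := by
      have h1 : (j:ℝ) * γ ≤ ((Nγ : ℝ) - 1) * γ :=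
        mul_le_mul_of_nonneg_right hjN hγpos.le
      have h2 : (r:ℝ) * δ ≤ (ℓ:ℝ) * δ := mul_le_mul_of_nonneg_right hrℓ hδ.le
      have h3 : ((Nγ : ℝ) - 1) * γ = T - γ := by rw [hTγ]; ring
      have h4 : γ = (ℓ:ℝ) * δ + δ := by rw [hγ]; ring
      linarith
    have hrδ : (0:ℝ) ≤ (r:ℝ) * δ := by positivity
    have hjγ : (0:ℝ) ≤ (j:ℝ) * γ := by positivity
    have hmem1 : (j:ℝ) * γ ∈ Set.Icc (0:ℝ) T := ⟨hjγ, by linarith⟩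
    have hmem2 : (j:ℝ) * γ + (r:ℝ) * δ ∈ Set.Icc (0:ℝ) T := ⟨by linarith, hle2⟩
    have := hw _ hmem1 _ hmem2
    have habs : |(j:ℝ) * γ - ((j:ℝ) * γ + (r:ℝ) * δ)| = (r:ℝ) * δ := by
      rw [show (j:ℝ) * γ - ((j:ℝ) * γ + (r:ℝ) * δ) = -((r:ℝ) * δ) by ring, abs_neg,
        abs_of_nonneg hrδ]
    rw [habs] at this
    exact this
  -- sum of the bounds equals c
  have hsum_bound : δ * ∑ j ∈ Finset.range Nγ, ∑ r ∈ Finset.range (ℓ + 1), L * ((r:ℝ) * δ)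
      = c := by
    have hgauss : ∑ r ∈ Finset.range (ℓ + 1), (r:ℝ) = (ℓ:ℝ) * ((ℓ:ℝ) + 1) / 2 := by
      have h := Finset.sum_range_id_mul_two (ℓ + 1)
      have h' : ((∑ i ∈ Finset.range (ℓ + 1), i : ℕ) : ℝ) * 2 = ((ℓ:ℝ) + 1) * (ℓ:ℝ) := by
        exact_mod_cast congrArg (Nat.cast : ℕ → ℝ) (by simpa using h)
      push_cast at h'
      linarith
    have hinner : ∀ j : ℕ, ∑ r ∈ Finset.range (ℓ + 1), L * ((r:ℝ) * δ)
        = L * δ * ((ℓ:ℝ) * ((ℓ:ℝ) + 1) / 2) := by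
      intro j
      rw [← Finset.mul_sum]
      rw [show (∑ r ∈ Finset.range (ℓ + 1), (r:ℝ) * δ) = (∑ r ∈ Finset.range (ℓ + 1), (r:ℝ)) * δ
        from (Finset.sum_mul _ _ _).symm, hgauss]
      ring
    rw [Finset.sum_congr rfl fun j _ => hinner j, Finset.sum_const, Finset.card_range,
      nsmul_eq_mul, hc, hTγ, hγ]
    ring
  -- bound opNorm D
  have hbound : opNorm D ≤ c := by
    rw [hD, opNorm_smul, abs_of_pos hδ, ← hsum_bound]
    refine mul_le_mul_of_nonneg_left ?_ hδ.le
    refine (opNorm_sum_le _ _).trans (Finset.sum_le_sum fun j hj => ?_)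
    exact (opNorm_sum_le _ _).trans (Finset.sum_le_sum fun r hr => hterm j hj r hr)
  have hpos1 : (c • (1 : Matrix (Fin n) (Fin n) ℝ) - D).PosSemidef := le_smul_one hDh hbound
  have hpos2 : (c • (1 : Matrix (Fin n) (Fin n) ℝ) + D).PosSemidef := by
    have hDh' : (-D).IsHermitian := hDh.neg
    have hb' : opNorm (-D) ≤ c := by rw [opNorm_neg_s18]; exact hbound
    have := le_smul_one hDh' hb'
    rwa [sub_neg_eq_add] at this
  constructor
  · intro h
    unfold loewnerLE at h ⊢
    have heq : Q + c • (1 : Matrix (Fin n) (Fin n) ℝ) - sampledGram γ Nγ w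
        = (Q - sampledGram δ Nδ w) + (c • (1 : Matrix (Fin n) (Fin n) ℝ) - D) := by
      rw [hDdef]; abel
    rw [heq]
    exact h.add hpos1
  · intro h
    unfold loewnerLE at h ⊢
    have heq : Q + c • (1 : Matrix (Fin n) (Fin n) ℝ) - sampledGram δ Nδ w
        = (Q - sampledGram γ Nγ w) + (c • (1 : Matrix (Fin n) (Fin n) ℝ) + D) := by
      rw [hDdef]; abel
    rw [heq]
    exact h.add hpos2
end
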